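/- arXiv:2111.04166 — 5 statements merged into one kernel-verified Lean document; each statement's English description precedes it below -/
import Mathlib

section
/- Let K be a field and let R(x) = g(x)/h(x) be a rational expression of degree r ≥ 1 over K, where g(x) = ∑_i g_i x^i and h(x) = ∑_i h_i x^i are coprime polynomials with max(deg g, deg h) = r. Let f(x) ∈ K[x] be a nonzero polynomial. Then deg f_R = r·deg f unless both h_r ≠ 0 and f(g_r/h_r) = 0. -/
open Polynomial

/-- The transform `f_R` of a nonzero polynomial `f` by the rational expression `R = g/h`:
`f_R(x) = h(x)^(deg f) * f(g(x)/h(x)) = ∑_{i=0}^{deg f} f_i g(x)^i h(x)^(deg f - i)`. -/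
noncomputable def ratTransform {K : Type*} [Field K] (g h f : K[X]) : K[X] :=
  ∑ i ∈ Finset.range (f.natDegree + 1), C (f.coeff i) * g ^ i * h ^ (f.natDegree - i)

/-- Lemma 1(a): `deg f_R = r · deg f` unless `h_r ≠ 0` and `f(g_r/h_r) = 0`. -/
theorem stmt0 {K : Type*} [Field K] (g h : K[X]) (hcop : IsCoprime g h)
    (r : ℕ) (hr : 1 ≤ r) (hdeg : max g.natDegree h.natDegree = r)
    (f : K[X]) (hf : f ≠ 0)
    (hexc : ¬ (h.coeff r ≠ 0 ∧ f.eval (g.coeff r / h.coeff r) = 0)) :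
    (ratTransform g h f).natDegree = r * f.natDegree := by
  set n := f.natDegree with hn
  have hgr : g.natDegree ≤ r := le_of_max_le_left hdeg.le
  have hhr : h.natDegree ≤ r := le_of_max_le_right hdeg.le
  -- key: coefficient at n*r
  have hcoeff : (ratTransform g h f).coeff (n * r)
      = ∑ i ∈ Finset.range (n + 1), f.coeff i * (g.coeff r) ^ i * (h.coeff r) ^ (n - i) := by
    rw [ratTransform, finset_sum_coeff]
    refine Finset.sum_congr rfl fun i hi => ?_
    have hi' : i ≤ n := Nat.lt_succ_iff.mp (Finset.mem_range.mp hi)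
    have key : n * r = i * r + (n - i) * r := by
      rw [← add_mul, Nat.add_sub_cancel' hi']
    rw [key, mul_assoc, coeff_C_mul,
      coeff_mul_add_eq_of_natDegree_le
        (natDegree_pow_le.trans (Nat.mul_le_mul_left i hgr))
        (natDegree_pow_le.trans (Nat.mul_le_mul_left _ hhr)),
      coeff_pow_of_natDegree_le hgr, coeff_pow_of_natDegree_le hhr, mul_assoc]
  have hS : (∑ i ∈ Finset.range (n + 1), f.coeff i * (g.coeff r) ^ i * (h.coeff r) ^ (n - i)) ≠ 0 := by
    by_cases hh : h.coeff r = 0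
    · have hhlt : h.natDegree < r := by
        rcases lt_or_eq_of_le hhr with h1 | h1
        · exact h1
        · exfalso
          have h0 : h = 0 := leadingCoeff_eq_zero.mp (by rw [leadingCoeff, h1, hh])
          rw [h0, natDegree_zero] at h1
          omega
      have hgeq : g.natDegree = r := by omega
      have hgne : g ≠ 0 := by
        intro c
        rw [c, natDegree_zero] at hgeq
        omega
      have hg0 : g.coeff r ≠ 0 := by
        rw [← hgeq, coeff_natDegree]
        exact mt leadingCoeff_eq_zero.mp hgne
      rw [Finset.sum_eq_single n]
      · simp only [Nat.sub_self, pow_zero, mul_one]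
        exact mul_ne_zero (by rw [coeff_natDegree]; exact mt leadingCoeff_eq_zero.mp hf)
          (pow_ne_zero _ hg0)
      · intro i hi hine
        have hile : i ≤ n := Nat.lt_succ_iff.mp (Finset.mem_range.mp hi)
        have : 0 < n - i := by omega
        rw [hh, zero_pow this.ne', mul_zero]
      · simp
    · have hfe : f.eval (g.coeff r / h.coeff r) ≠ 0 := fun c => hexc ⟨hh, c⟩
      have : (∑ i ∈ Finset.range (n + 1), f.coeff i * (g.coeff r) ^ i * (h.coeff r) ^ (n - i))
          = (h.coeff r) ^ n * f.eval (g.coeff r / h.coeff r) := by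
        rw [eval_eq_sum_range, ← hn, Finset.mul_sum]
        refine Finset.sum_congr rfl fun i hi => ?_
        have hi' : i ≤ n := Nat.lt_succ_iff.mp (Finset.mem_range.mp hi)
        rw [pow_sub₀ _ hh hi', div_pow]
        field_simp
      rw [this]
      exact mul_ne_zero (pow_ne_zero _ hh) hfe
  refine le_antisymm ?_ ?_
  · refine (natDegree_sum_le _ _).trans ?_
    rw [Finset.fold_max_le]
    constructor
    · positivity
    intro i hi
    have hi' : i ≤ n := Nat.lt_succ_iff.mp (Finset.mem_range.mp hi)
    calc (C (f.coeff i) * g ^ i * h ^ (n - i)).natDegree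
        ≤ (C (f.coeff i) * g ^ i).natDegree + (h ^ (n-i)).natDegree := natDegree_mul_le
      _ ≤ ((C (f.coeff i)).natDegree + (g ^ i).natDegree) + (h ^ (n-i)).natDegree :=
          Nat.add_le_add_right natDegree_mul_le _
      _ ≤ (0 + i * r) + (n - i) * r := add_le_add (add_le_add (by simp)
          (natDegree_pow_le.trans (Nat.mul_le_mul_left i hgr)))
          (natDegree_pow_le.trans (Nat.mul_le_mul_left _ hhr))
      _ = r * n := by rw [zero_add, ← add_mul, Nat.add_sub_cancel' hi', mul_comm]
  · rw [mul_comm]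
    exact le_natDegree_of_ne_zero (hcoeff ▸ hS)
end

section
/- Let R(x) = g(x)/h(x) be a rational expression of degree r ≥ 1 over the finite field F_q, with g, h coprime. Let A(x) and B(x) be linear rational expressions (Möbius transformations, i.e. rational expressions of degree 1) over F_q, and write (B ∘ R ∘ A)(x) = g̃(x)/h̃(x) with g̃, h̃ coprime. Then for every integer n > 1, |𝓘(g̃, h̃, n, q)| = |𝓘(g, h, n, q)|. -/
open Polynomial

/-- `𝓘(g,h,n,q)`: the set of monic irreducible polynomials `f` of degree `n` over the field
such that `f_R` is irreducible. -/
noncomputable def IrredSet {K : Type*} [Field K] (g h : K[X]) (n : ℕ) : Set K[X] :=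
  {f | f.Monic ∧ Irreducible f ∧ f.natDegree = n ∧ Irreducible (ratTransform g h f)}

noncomputable section
namespace HomTAux
variable {F : Type*} [Field F]

/-- homogeneous substitution of `G/H` into `p`, viewed at degree `n`. -/
def homT (G H : F[X]) (n : ℕ) (p : F[X]) : F[X] :=
  ∑ i ∈ Finset.range (n + 1), C (p.coeff i) * G ^ i * H ^ (n - i)

lemma homT_zero (G H : F[X]) (n : ℕ) : homT G H n (0 : F[X]) = 0 := by
  simp [homT]

lemma homT_C_mul (G H : F[X]) (n : ℕ) (k : F) (p : F[X]) :
    homT G H n (C k * p) = C k * homT G H n p := by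
  simp only [homT, Finset.mul_sum, coeff_C_mul, map_mul, mul_assoc]

lemma homT_natDegree_le (G H : F[X]) {s : ℕ} (hG : G.natDegree ≤ s) (hH : H.natDegree ≤ s)
    (n : ℕ) (p : F[X]) : (homT G H n p).natDegree ≤ n * s := by
  apply natDegree_sum_le_of_forall_le
  intro i hi
  have hi' : i ≤ n := Finset.mem_range_succ_iff.mp hi
  calc (C (p.coeff i) * G ^ i * H ^ (n - i)).natDegree
      ≤ (C (p.coeff i) * G ^ i).natDegree + (H ^ (n-i)).natDegree := natDegree_mul_le
    _ ≤ ((C (p.coeff i)).natDegree + (G ^ i).natDegree) + (H ^ (n-i)).natDegree := by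
        exact Nat.add_le_add_right natDegree_mul_le _
    _ ≤ (0 + i * s) + (n - i) * s := by
        gcongr
        · simp
        · exact natDegree_pow_le.trans (by gcongr)
        · exact natDegree_pow_le.trans (by gcongr)
    _ ≤ n * s := by
        rw [zero_add, ← add_mul]
        gcongr
        omega

lemma coeff_mul_top {u v : F[X]} {a b : ℕ} (hu : u.natDegree ≤ a) (hv : v.natDegree ≤ b) :
    (u * v).coeff (a + b) = u.coeff a * v.coeff b := by
  rcases lt_or_eq_of_le hu with h | h
  · have h1 : (u*v).natDegree < a + b := by
      calc (u*v).natDegree ≤ u.natDegree + v.natDegree := natDegree_mul_le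
        _ < a + b := by omega
    rw [coeff_eq_zero_of_natDegree_lt h1, coeff_eq_zero_of_natDegree_lt h, zero_mul]
  rcases lt_or_eq_of_le hv with h2 | h2
  · have h1 : (u*v).natDegree < a + b := by
      calc (u*v).natDegree ≤ u.natDegree + v.natDegree := natDegree_mul_le
        _ < a + b := by omega
    rw [coeff_eq_zero_of_natDegree_lt h1, coeff_eq_zero_of_natDegree_lt h2, mul_zero]
  subst h h2
  exact coeff_mul_degree_add_degree u v

lemma coeff_pow_top {u : F[X]} {s : ℕ} (hu : u.natDegree ≤ s) (i : ℕ) :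
    (u ^ i).coeff (i * s) = (u.coeff s) ^ i := by
  induction i with
  | zero => simp
  | succ i ih =>
      have h1 : (u ^ i).natDegree ≤ i * s := natDegree_pow_le.trans (by gcongr)
      rw [pow_succ, show (i+1) * s = i * s + s by ring, coeff_mul_top h1 hu, ih, pow_succ]

lemma homT_coeff_top (G H : F[X]) {s : ℕ} (hG : G.natDegree ≤ s) (hH : H.natDegree ≤ s)
    (n : ℕ) (p : F[X]) :
    (homT G H n p).coeff (n * s)
      = ∑ i ∈ Finset.range (n + 1), p.coeff i * (G.coeff s) ^ i * (H.coeff s) ^ (n - i) := by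
  rw [homT, finset_sum_coeff]
  apply Finset.sum_congr rfl
  intro i hi
  have hi' : i ≤ n := Finset.mem_range_succ_iff.mp hi
  have h1 : (G ^ i).natDegree ≤ i * s := natDegree_pow_le.trans (by gcongr)
  have h2 : (H ^ (n-i)).natDegree ≤ (n-i) * s := natDegree_pow_le.trans (by gcongr)
  rw [mul_assoc, coeff_C_mul, show n * s = i * s + (n - i) * s by
      rw [← add_mul]; congr 1; omega,
    coeff_mul_top h1 h2, coeff_pow_top hG, coeff_pow_top hH, mul_assoc]

lemma homT_eval (G H : F[X]) (n : ℕ) (p : F[X]) (x : F) :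
    eval x (homT G H n p)
      = ∑ i ∈ Finset.range (n + 1), p.coeff i * (eval x G) ^ i * (eval x H) ^ (n - i) := by
  simp [homT, eval_finset_sum]

lemma homT_aeval {K : Type*} [Field K] [Algebra F K] (G H : F[X]) {n : ℕ} {p : F[X]}
    (hp : p.natDegree ≤ n) (t : K) (hH : aeval t H ≠ 0) :
    aeval t (homT G H n p)
      = (aeval t H) ^ n * aeval ((aeval t G) / (aeval t H)) p := by
  rw [homT, map_sum, aeval_eq_sum_range' (lt_of_le_of_lt hp (Nat.lt_succ_self n)),
    Finset.mul_sum]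
  apply Finset.sum_congr rfl
  intro i hi
  have hi' : i ≤ n := Finset.mem_range_succ_iff.mp hi
  rw [map_mul, map_mul, map_pow, map_pow, aeval_C, Algebra.smul_def, div_pow,
    pow_sub₀ _ hH hi']
  field_simp

lemma aeval_ratfuncX (q : F[X]) :
    aeval (algebraMap F[X] (RatFunc F) X) q = algebraMap F[X] (RatFunc F) q := by
  rw [aeval_algebraMap_apply, aeval_X_left_apply]

lemma algebraMap_ratfunc_injective :
    Function.Injective (algebraMap F[X] (RatFunc F)) :=
  IsFractionRing.injective _ _

lemma homT_algebraMap (G H : F[X]) {n : ℕ} {p : F[X]} (hp : p.natDegree ≤ n) (hH : H ≠ 0) :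
    algebraMap F[X] (RatFunc F) (homT G H n p)
      = (algebraMap F[X] (RatFunc F) H) ^ n
        * aeval ((algebraMap F[X] (RatFunc F) G) / (algebraMap F[X] (RatFunc F) H)) p := by
  have hH' : aeval (algebraMap F[X] (RatFunc F) X) H ≠ 0 := by
    rw [aeval_ratfuncX]
    exact fun h => hH (algebraMap_ratfunc_injective (by simpa using h))
  have := homT_aeval (K := RatFunc F) G H hp (algebraMap F[X] (RatFunc F) X) hH'
  rw [aeval_ratfuncX, aeval_ratfuncX, aeval_ratfuncX] at this
  exact this

lemma linear_ne_zero {u v : F} (h : u ≠ 0 ∨ v ≠ 0) : (C u * X + C v : F[X]) ≠ 0 := by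
  intro h0
  rcases h with h | h
  · apply h
    have := congrArg (fun p => Polynomial.coeff p 1) h0
    simpa using this
  · apply h
    have := congrArg (fun p => Polynomial.coeff p 0) h0
    simpa using this

lemma homT_mul (G H : F[X]) {m k : ℕ} {u v : F[X]} (hu : u.natDegree ≤ m)
    (hv : v.natDegree ≤ k) (hH : H ≠ 0) :
    homT G H (m + k) (u * v) = homT G H m u * homT G H k v := by
  apply algebraMap_ratfunc_injective
  have huv : (u*v).natDegree ≤ m + k := natDegree_mul_le.trans (add_le_add hu hv)
  rw [map_mul, homT_algebraMap G H huv hH, homT_algebraMap G H hu hH,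
    homT_algebraMap G H hv hH, map_mul]
  ring

lemma homT_pad (G H : F[X]) {m n : ℕ} {p : F[X]} (hp : p.natDegree ≤ m) (hmn : m ≤ n)
    (hH : H ≠ 0) : homT G H n p = H ^ (n - m) * homT G H m p := by
  apply algebraMap_ratfunc_injective
  have hH' : algebraMap F[X] (RatFunc F) H ≠ 0 := by
    rwa [map_ne_zero_iff _ algebraMap_ratfunc_injective]
  rw [map_mul, homT_algebraMap G H (hp.trans hmn) hH, homT_algebraMap G H hp hH, map_pow,
    pow_sub₀ _ hH' hmn]
  field_simp

lemma homT_homT (a b c d : F) (hdet : a * d - b * c ≠ 0) {m : ℕ} {p : F[X]}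
    (hp : p.natDegree ≤ m) :
    homT (C d * X + C (-b)) (C (-c) * X + C a) m
        (homT (C a * X + C b) (C c * X + C d) m p)
      = C ((a * d - b * c) ^ m) * p := by
  have hcd : c ≠ 0 ∨ d ≠ 0 := by
    by_contra hcon; push_neg at hcon
    apply hdet; rw [hcon.1, hcon.2]; ring
  have hca : -c ≠ 0 ∨ a ≠ 0 := by
    by_contra hcon; push_neg at hcon
    apply hdet
    have hc : c = 0 := by have := hcon.1; simpa using this
    rw [hc, hcon.2]; ring
  have hL2 : (C c * X + C d : F[X]) ≠ 0 := linear_ne_zero hcd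
  have hHp : (C (-c) * X + C a : F[X]) ≠ 0 := linear_ne_zero hca
  set φ := algebraMap F[X] (RatFunc F) with hφ
  have hinj : Function.Injective φ := algebraMap_ratfunc_injective
  apply hinj
  have hφH : φ (C (-c) * X + C a) ≠ 0 := by rwa [map_ne_zero_iff _ hinj]
  have hφL2 : φ (C c * X + C d) ≠ 0 := by rwa [map_ne_zero_iff _ hinj]
  -- abbreviations
  set x := φ X with hx
  set t : RatFunc F := φ (C d * X + C (-b)) / φ (C (-c) * X + C a) with ht
  -- inner natDegree bound
  have hinner : (homT (C a * X + C b) (C c * X + C d) m p).natDegree ≤ m := by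
    have := homT_natDegree_le (C a * X + C b) (C c * X + C d)
      (s := 1) natDegree_linear_le natDegree_linear_le m p
    simpa using this
  rw [homT_algebraMap _ _ hinner hHp]
  have hCmap : ∀ k : F, algebraMap F (RatFunc F) k = φ (C k) := by
    intro k
    rw [hφ, IsScalarTower.algebraMap_apply F F[X] (RatFunc F)]
    rfl
  -- compute aeval t of linear polys
  have cancel : ∀ u : RatFunc F, u * (φ (C d * X + C (-b)) / φ (C (-c) * X + C a))
      * φ (C (-c) * X + C a) = u * φ (C d * X + C (-b)) := by
    intro u
    rw [mul_assoc, div_mul_cancel₀ _ hφH]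
  have e2 : aeval t (C c * X + C d) * φ (C (-c) * X + C a) = φ (C (a*d - b*c)) := by
    rw [map_add, map_mul, aeval_C, aeval_X, aeval_C, hCmap, hCmap, ht, add_mul,
      cancel, ← map_mul, ← map_mul, ← map_add]
    congr 1
    simp only [map_add, map_sub, map_neg, map_mul]
    ring
  have e1 : aeval t (C a * X + C b) * φ (C (-c) * X + C a) = φ (C (a*d - b*c) * X) := by
    rw [map_add, map_mul, aeval_C, aeval_X, aeval_C, hCmap, hCmap, ht, add_mul,
      cancel, ← map_mul, ← map_mul, ← map_add]
    congr 1
    simp only [map_add, map_sub, map_neg, map_mul]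
    ring
  have hdet' : φ (C (a*d - b*c)) ≠ 0 := by
    rw [map_ne_zero_iff _ hinj]
    exact C_ne_zero.mpr hdet
  have hne2 : aeval t (C c * X + C d) ≠ 0 := by
    intro h0
    rw [h0, zero_mul] at e2
    exact hdet' e2.symm
  rw [homT_aeval _ _ hp t hne2]
  -- now identify the evaluation point with x
  have f1 : aeval t (C a * X + C b) = φ (C (a*d - b*c) * X) / φ (C (-c) * X + C a) := by
    rw [eq_div_iff hφH]; exact e1
  have f2 : aeval t (C c * X + C d) = φ (C (a*d - b*c)) / φ (C (-c) * X + C a) := by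
    rw [eq_div_iff hφH]; exact e2
  have hpoint : aeval t (C a * X + C b) / aeval t (C c * X + C d) = x := by
    rw [f1, f2, div_div_div_comm, div_self hφH, div_one, map_mul, mul_comm,
      mul_div_assoc, div_self hdet', mul_one, hx]
  rw [hpoint]
  -- both sides now: φH^m * (aeval t L2)^m * aeval x p  vs  φ(C det^m * p)
  rw [map_mul, hx]
  have haev : aeval (φ X) p = φ p := by
    rw [hφ, aeval_algebraMap_apply, aeval_X_left_apply]
  rw [haev]
  have : φ (C (-c) * X + C a) ^ m * (aeval t (C c * X + C d)) ^ m
      = φ (C ((a*d - b*c) ^ m)) := by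
    rw [← mul_pow, mul_comm, e2]
    simp [map_pow]
  rw [← mul_assoc, this]

lemma irred_C_mul {k : F} (hk : k ≠ 0) (p : F[X]) :
    Irreducible (C k * p) ↔ Irreducible p := by
  have hu : IsUnit (C k : F[X]) := isUnit_C.mpr hk.isUnit
  exact (irreducible_units_mul hu.unit : Irreducible ((hu.unit : F[X]) * p) ↔ Irreducible p) |>.symm.trans (by rw [hu.unit_spec]) |>.symm
    |>.trans Iff.rfl

lemma irred_eval_ne_zero {f : F[X]} (hirr : Irreducible f) (hdeg : 2 ≤ f.natDegree) (x : F) :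
    eval x f ≠ 0 := by
  intro h0
  obtain ⟨q, hq⟩ := (dvd_iff_isRoot.mpr h0 : (X - C x) ∣ f)
  have hXC : (X - C x : F[X]).natDegree = 1 := natDegree_X_sub_C x
  have hf0 : f ≠ 0 := fun h => by simp [h] at hdeg
  have hq0 : q ≠ 0 := by rintro rfl; rw [mul_zero] at hq; exact hf0 hq
  rcases hirr.isUnit_or_isUnit hq with h | h
  · have := natDegree_eq_zero_of_isUnit h
    omega
  · have h1 := natDegree_eq_zero_of_isUnit h
    have h2 : f.natDegree = 1 := by
      rw [hq, natDegree_mul (X_sub_C_ne_zero x) hq0, hXC, h1]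
    omega

lemma binform_ne_zero {f : F[X]} (hf : f.Monic) (hirr : Irreducible f)
    (hdeg : 2 ≤ f.natDegree) (α β : F) (hab : α ≠ 0 ∨ β ≠ 0) :
    (∑ i ∈ Finset.range (f.natDegree + 1), f.coeff i * α ^ i * β ^ (f.natDegree - i)) ≠ 0 := by
  by_cases hβ : β = 0
  · have hα : α ≠ 0 := by tauto
    subst hβ
    rw [Finset.sum_eq_single f.natDegree]
    · rw [hf.coeff_natDegree, Nat.sub_self, pow_zero, mul_one, one_mul]
      exact pow_ne_zero _ hα
    · intro i hi hne
      have hi' : i ≤ f.natDegree := Finset.mem_range_succ_iff.mp hi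
      rw [zero_pow (by omega : f.natDegree - i ≠ 0), mul_zero]
    · intro h; exact absurd (Finset.self_mem_range_succ f.natDegree) h
  · have key : (∑ i ∈ Finset.range (f.natDegree + 1), f.coeff i * α ^ i * β ^ (f.natDegree - i))
        = β ^ f.natDegree * eval (α / β) f := by
      rw [eval_eq_sum_range' (Nat.lt_succ_self f.natDegree), Finset.mul_sum]
      apply Finset.sum_congr rfl
      intro i hi
      have hi' : i ≤ f.natDegree := Finset.mem_range_succ_iff.mp hi
      rw [div_pow, pow_sub₀ _ hβ hi']
      field_simp
    rw [key]
    exact mul_ne_zero (pow_ne_zero _ hβ) (irred_eval_ne_zero hirr hdeg _)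

lemma homT_natDegree_eq (G H : F[X]) {s : ℕ} (hG : G.natDegree ≤ s) (hH : H.natDegree ≤ s)
    (hpair : G.coeff s ≠ 0 ∨ H.coeff s ≠ 0) {n : ℕ} {f : F[X]} (hf : f.Monic)
    (hirr : Irreducible f) (hdeg : 2 ≤ n) (hfn : f.natDegree = n) :
    (homT G H n f).coeff (n * s) ≠ 0 ∧ (homT G H n f).natDegree = n * s := by
  have hc : (homT G H n f).coeff (n * s) ≠ 0 := by
    rw [homT_coeff_top G H hG hH n f]
    subst hfn
    exact binform_ne_zero hf hirr hdeg _ _ hpair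
  exact ⟨hc, le_antisymm (homT_natDegree_le G H hG hH n f) (le_natDegree_of_ne_zero hc)⟩

lemma M_forward (a b c d : F) (hdet : a * d - b * c ≠ 0) {m : ℕ} (hm : 2 ≤ m) {p : F[X]}
    (hdp : p.natDegree = m) (hp : Irreducible p) :
    Irreducible (homT (C a * X + C b) (C c * X + C d) m p) := by
  have hHne : (C (-c) * X + C a : F[X]) ≠ 0 := by
    apply linear_ne_zero
    by_contra hcon; push_neg at hcon
    apply hdet
    have : c = 0 := by have := hcon.1; simpa using this
    rw [this, hcon.2]; ring
  have hdet2 : (a * d - b * c) ^ m ≠ 0 := pow_ne_zero _ hdet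
  have hinv := homT_homT a b c d hdet (p := p) (m := m) hdp.le
  set Q := homT (C a * X + C b) (C c * X + C d) m p with hQdef
  have hQ0 : Q ≠ 0 := by
    intro h0
    rw [h0, homT_zero] at hinv
    have : p = 0 := by
      have := hinv.symm
      rcases mul_eq_zero.mp this with h | h
      · exact absurd h (C_ne_zero.mpr hdet2)
      · exact h
    exact hp.ne_zero this
  have hp0 : p ≠ 0 := hp.ne_zero
  have hCp : Irreducible (C ((a * d - b * c) ^ m) * p) :=
    (irred_C_mul hdet2 p).mpr hp
  constructor
  · -- Q is not a unit
    intro hu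
    obtain ⟨k, hk, hCk⟩ := Polynomial.isUnit_iff.mp hu
    have hk0 : k ≠ 0 := fun h => by simp [h] at hCk; exact hQ0 hCk.symm
    have hpad : homT (C d * X + C (-b)) (C (-c) * X + C a) m Q
        = (C (-c) * X + C a) ^ m * C k := by
      rw [← hCk, homT_pad _ _ (by simp : (C k : F[X]).natDegree ≤ 0) (Nat.zero_le m) hHne]
      simp [homT]
    rw [hinv] at hpad
    -- C det^m * p = H^m * C k, contradiction with irreducibility of p
    have : Irreducible ((C (-c) * X + C a) ^ m * C k) := hpad ▸ hCp
    have hrw : (C (-c) * X + C a : F[X]) ^ m * C k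
        = (C k * (C (-c) * X + C a) ^ (m-1)) * (C (-c) * X + C a) := by
      rw [mul_comm, mul_assoc, ← pow_succ, Nat.sub_add_cancel (by omega : 1 ≤ m)]
    have hdegH : (C (-c) * X + C a : F[X]).natDegree = 1 := by
      have h1 := congrArg natDegree hpad
      rw [natDegree_mul (C_ne_zero.mpr hdet2) hp0, natDegree_C, zero_add, hdp,
        natDegree_mul (pow_ne_zero _ hHne) (C_ne_zero.mpr hk0), natDegree_C, add_zero,
        natDegree_pow] at h1
      have hle : (C (-c) * X + C a : F[X]).natDegree ≤ 1 := natDegree_linear_le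
      rcases Nat.le_one_iff_eq_zero_or_eq_one.mp hle with h | h
      · rw [h, mul_zero] at h1; omega
      · exact h
    rcases this.isUnit_or_isUnit hrw with h | h
    · have hd := natDegree_eq_zero_of_isUnit h
      rw [natDegree_mul (C_ne_zero.mpr hk0) (pow_ne_zero _ hHne), natDegree_C, zero_add,
        natDegree_pow, hdegH, mul_one] at hd
      omega
    · have hd := natDegree_eq_zero_of_isUnit h
      rw [hdegH] at hd
      exact one_ne_zero hd
  · -- factorization
    intro u v huv
    have hu0 : u ≠ 0 := fun h => hQ0 (by rw [huv, h, zero_mul])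
    have hv0 : v ≠ 0 := fun h => hQ0 (by rw [huv, h, mul_zero])
    set s := u.natDegree with hs
    set t := v.natDegree with htt
    have hst : s + t = Q.natDegree := by rw [huv, natDegree_mul hu0 hv0]
    have hQle : Q.natDegree ≤ m := by
      have := homT_natDegree_le (C a * X + C b) (C c * X + C d)
        (s := 1) natDegree_linear_le natDegree_linear_le m p
      simpa using this
    have htm : t ≤ m := by omega
    have hum : u.natDegree ≤ m - t := by omega
    have hmul := homT_mul (C d * X + C (-b)) (C (-c) * X + C a)
      (m := m - t) (k := t) (u := u) (v := v) hum htt.symm.le hHne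
    rw [show (m - t) + t = m by omega, ← huv, hinv] at hmul
    set U := homT (C d * X + C (-b)) (C (-c) * X + C a) (m - t) u with hU
    set V := homT (C d * X + C (-b)) (C (-c) * X + C a) t v with hV
    have hU0 : U ≠ 0 := by
      intro h; rw [h, zero_mul] at hmul
      exact (mul_ne_zero (C_ne_zero.mpr hdet2) hp0) hmul
    have hV0 : V ≠ 0 := by
      intro h; rw [h, mul_zero] at hmul
      exact (mul_ne_zero (C_ne_zero.mpr hdet2) hp0) hmul
    have hdegsum : U.natDegree + V.natDegree = m := by
      have := congrArg natDegree hmul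
      rw [natDegree_mul (C_ne_zero.mpr hdet2) hp0, natDegree_C, zero_add, hdp,
        natDegree_mul hU0 hV0] at this
      omega
    have hUle : U.natDegree ≤ m - t := by
      have := homT_natDegree_le (C d * X + C (-b)) (C (-c) * X + C a)
        (s := 1) natDegree_linear_le natDegree_linear_le (m - t) u
      rw [mul_one] at this
      exact this
    have hVle : V.natDegree ≤ t := by
      have := homT_natDegree_le (C d * X + C (-b)) (C (-c) * X + C a)
        (s := 1) natDegree_linear_le natDegree_linear_le t v
      rw [mul_one] at this
      exact this
    rcases hCp.isUnit_or_isUnit hmul with h | h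
    · -- U unit → V has degree m → t = m, s = 0 → u unit
      have h0 := natDegree_eq_zero_of_isUnit h
      obtain ⟨w, hw⟩ := Polynomial.natDegree_eq_zero.mp (by omega : u.natDegree = 0)
      left
      rw [← hw, isUnit_C]
      exact isUnit_iff_ne_zero.mpr (fun hh => hu0 (by rw [← hw, hh, map_zero]))
    · have h0 := natDegree_eq_zero_of_isUnit h
      obtain ⟨w, hw⟩ := Polynomial.natDegree_eq_zero.mp (by omega : v.natDegree = 0)
      right
      rw [← hw, isUnit_C]
      exact isUnit_iff_ne_zero.mpr (fun hh => hv0 (by rw [← hw, hh, map_zero]))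

lemma M_iff (a b c d : F) (hdet : a * d - b * c ≠ 0) {m : ℕ} (hm : 2 ≤ m) {p : F[X]}
    (hdp : p.natDegree = m)
    (hQd : (homT (C a * X + C b) (C c * X + C d) m p).natDegree = m) :
    Irreducible (homT (C a * X + C b) (C c * X + C d) m p) ↔ Irreducible p := by
  constructor
  · intro hQ
    have hdet2 : (a * d - b * c) ^ m ≠ 0 := pow_ne_zero _ hdet
    have hdet' : d * a - (-b) * (-c) ≠ 0 := by
      rw [show d * a - (-b) * (-c) = a * d - b * c by ring]; exact hdet
    have := M_forward d (-b) (-c) a hdet' hm hQd hQ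
    rw [homT_homT a b c d hdet hdp.le] at this
    exact (irred_C_mul hdet2 p).mp this
  · exact fun hp => M_forward a b c d hdet hm hdp hp
lemma coeff_linear_one (a b : F) : (C a * X + C b).coeff 1 = a := by
  simp [coeff_add, coeff_C]

lemma homT_lin_natDegree_eq (a b c d : F) (hdet : a * d - b * c ≠ 0) {m : ℕ} (hm : 1 ≤ m)
    {P : F[X]} (hPd : P.natDegree = m) (hev : c = 0 ∨ eval (a / c) P ≠ 0) :
    (homT (C a * X + C b) (C c * X + C d) m P).natDegree = m := by
  have hP0 : P ≠ 0 := fun h0 => by rw [h0, natDegree_zero] at hPd; omega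
  have hcoeff : (homT (C a * X + C b) (C c * X + C d) m P).coeff (m * 1) ≠ 0 := by
    rw [homT_coeff_top _ _ (natDegree_linear_le) (natDegree_linear_le) m P,
      coeff_linear_one, coeff_linear_one]
    by_cases hc : c = 0
    · subst hc
      have ha : a ≠ 0 := fun h' => hdet (by rw [h']; ring)
      rw [Finset.sum_eq_single m]
      · have : P.coeff m ≠ 0 := by
          rw [← hPd]; exact fun h => hP0 (leadingCoeff_eq_zero.mp h)
        simpa using mul_ne_zero (mul_ne_zero this (pow_ne_zero _ ha)) one_ne_zero
      · intro i hi hne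
        have : i ≤ m := Finset.mem_range_succ_iff.mp hi
        rw [zero_pow (by omega : m - i ≠ 0), mul_zero]
      · intro hmem; exact absurd (Finset.self_mem_range_succ m) hmem
    · have hev' : eval (a / c) P ≠ 0 := by tauto
      have key : (∑ i ∈ Finset.range (m + 1), P.coeff i * a ^ i * c ^ (m - i))
          = c ^ m * eval (a / c) P := by
        rw [eval_eq_sum_range' (by omega : P.natDegree < m + 1), Finset.mul_sum]
        apply Finset.sum_congr rfl
        intro i hi
        have hi' : i ≤ m := Finset.mem_range_succ_iff.mp hi
        rw [div_pow, pow_sub₀ _ hc hi']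
        field_simp
      rw [key]
      exact mul_ne_zero (pow_ne_zero _ hc) hev'
  rw [mul_one] at hcoeff
  refine le_antisymm ?_ (le_natDegree_of_ne_zero hcoeff)
  have := homT_natDegree_le (C a * X + C b) (C c * X + C d)
    (s := 1) natDegree_linear_le natDegree_linear_le m P
  rwa [mul_one] at this

lemma transform_comp (g h : F[X]) {r : ℕ} (hg : g.natDegree ≤ r) (hh : h.natDegree ≤ r)
    (hh0 : h ≠ 0) (a b c d : F) (hdet : a * d - b * c ≠ 0) {n : ℕ} {f : F[X]}
    (hf : f.natDegree ≤ n) :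
    homT (homT (C a * X + C b) (C c * X + C d) r g)
         (homT (C a * X + C b) (C c * X + C d) r h) n f
      = homT (C a * X + C b) (C c * X + C d) (n * r) (homT g h n f) := by
  have hcd : c ≠ 0 ∨ d ≠ 0 := by
    by_contra hcon; push_neg at hcon
    exact hdet (by rw [hcon.1, hcon.2]; ring)
  have hL2 : (C c * X + C d : F[X]) ≠ 0 := linear_ne_zero hcd
  have hAne : homT (C a * X + C b) (C c * X + C d) r h ≠ 0 := by
    intro h0
    have := homT_homT a b c d hdet (p := h) (m := r) hh
    rw [h0, homT_zero] at this
    rcases mul_eq_zero.mp this.symm with h1 | h1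
    · exact C_ne_zero.mpr (pow_ne_zero _ hdet) h1
    · exact hh0 h1
  set φ := algebraMap F[X] (RatFunc F) with hφ
  have hinj : Function.Injective φ := algebraMap_ratfunc_injective
  apply hinj
  have hφL2 : φ (C c * X + C d) ≠ 0 := by rwa [map_ne_zero_iff _ hinj]
  have hφhA : φ (homT (C a * X + C b) (C c * X + C d) r h) ≠ 0 := by
    rwa [map_ne_zero_iff _ hinj]
  set t : RatFunc F := φ (C a * X + C b) / φ (C c * X + C d) with ht
  have egA : φ (homT (C a * X + C b) (C c * X + C d) r g)
      = φ (C c * X + C d) ^ r * aeval t g := homT_algebraMap _ _ hg hL2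
  have ehA : φ (homT (C a * X + C b) (C c * X + C d) r h)
      = φ (C c * X + C d) ^ r * aeval t h := homT_algebraMap _ _ hh hL2
  have hth : aeval t h ≠ 0 := by
    intro h0
    rw [ehA, h0, mul_zero] at hφhA
    exact hφhA rfl
  rw [homT_algebraMap _ _ hf hAne,
    homT_algebraMap _ _ (homT_natDegree_le g h hg hh n f) hL2,
    homT_aeval g h hf t hth, egA, ehA,
    mul_div_mul_left _ _ (pow_ne_zero r hφL2), mul_pow, ← pow_mul]
  ring_nf
  rw [← hφ]
  ring

lemma transform_post (gA hA g' h' : F[X]) (hhA0 : hA ≠ 0) (hh'0 : h' ≠ 0)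
    (a b c d k : F) (hk : k ≠ 0)
    (e1 : C a * gA + C b * hA = g' * C k) (e2 : C c * gA + C d * hA = h' * C k)
    {n : ℕ} {f : F[X]} (hf : f.natDegree ≤ n) :
    homT gA hA n (homT (C a * X + C b) (C c * X + C d) n f)
      = C (k ^ n) * homT g' h' n f := by
  set φ := algebraMap F[X] (RatFunc F) with hφ
  have hinj : Function.Injective φ := algebraMap_ratfunc_injective
  apply hinj
  have hφhA : φ hA ≠ 0 := by rwa [map_ne_zero_iff _ hinj]
  have hφh'k : φ (h' * C k) ≠ 0 := by
    rw [map_ne_zero_iff _ hinj]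
    exact mul_ne_zero hh'0 (C_ne_zero.mpr hk)
  have hφCk : φ (C k) ≠ 0 := by
    rw [map_ne_zero_iff _ hinj]; exact C_ne_zero.mpr hk
  have hφh' : φ h' ≠ 0 := by rwa [map_ne_zero_iff _ hinj]
  have hCmap : ∀ u : F, algebraMap F (RatFunc F) u = φ (C u) := by
    intro u
    rw [hφ, IsScalarTower.algebraMap_apply F F[X] (RatFunc F)]
    rfl
  set z : RatFunc F := φ gA / φ hA with hz
  have hinner : (homT (C a * X + C b) (C c * X + C d) n f).natDegree ≤ n := by
    have := homT_natDegree_le (C a * X + C b) (C c * X + C d)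
      (s := 1) natDegree_linear_le natDegree_linear_le n f
    rwa [mul_one] at this
  have cancel : ∀ u : RatFunc F, u * (φ gA / φ hA) * φ hA = u * φ gA := by
    intro u; rw [mul_assoc, div_mul_cancel₀ _ hφhA]
  have ez2 : aeval z (C c * X + C d) * φ hA = φ (h' * C k) := by
    rw [map_add, map_mul, aeval_C, aeval_X, aeval_C, hCmap, hCmap, hz, add_mul, cancel,
      ← map_mul, ← map_mul, ← map_add, ← e2]
  have ez1 : aeval z (C a * X + C b) * φ hA = φ (g' * C k) := by
    rw [map_add, map_mul, aeval_C, aeval_X, aeval_C, hCmap, hCmap, hz, add_mul, cancel,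
      ← map_mul, ← map_mul, ← map_add, ← e1]
  have hz2 : aeval z (C c * X + C d) ≠ 0 := by
    intro h0; rw [h0, zero_mul] at ez2; exact hφh'k ez2.symm
  have f1 : aeval z (C a * X + C b) = φ (g' * C k) / φ hA := by
    rw [eq_div_iff hφhA]; exact ez1
  have f2 : aeval z (C c * X + C d) = φ (h' * C k) / φ hA := by
    rw [eq_div_iff hφhA]; exact ez2
  have hpoint : aeval z (C a * X + C b) / aeval z (C c * X + C d) = φ g' / φ h' := by
    rw [f1, f2, div_div_div_comm, div_self hφhA, div_one, map_mul, map_mul,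
      mul_div_mul_right _ _ hφCk]
  rw [homT_algebraMap _ _ hinner hhA0, homT_aeval _ _ hf z hz2, hpoint, map_mul,
    homT_algebraMap _ _ hf hh'0, ← mul_assoc, ← mul_pow, mul_comm (φ hA), ez2, map_mul,
    mul_pow, ← map_pow, ← map_pow]
  have : φ (C k ^ n) = φ (C (k ^ n)) := by rw [← map_pow C k n]
  rw [this]
  ring

def mob (a b c d : F) (n : ℕ) (f : F[X]) : F[X] :=
  C ((homT (C a * X + C b) (C c * X + C d) n f).coeff n)⁻¹
    * homT (C a * X + C b) (C c * X + C d) n f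

lemma mob_spec (a b c d : F) (hdet : a * d - b * c ≠ 0) {n : ℕ} {f : F[X]} (hn : 2 ≤ n)
    (hf : f.Monic) (hirr : Irreducible f) (hdf : f.natDegree = n) :
    (mob a b c d n f).Monic ∧ Irreducible (mob a b c d n f)
      ∧ (mob a b c d n f).natDegree = n
      ∧ (homT (C a * X + C b) (C c * X + C d) n f).coeff n ≠ 0
      ∧ homT (C a * X + C b) (C c * X + C d) n f
          = C ((homT (C a * X + C b) (C c * X + C d) n f).coeff n) * mob a b c d n f := by
  have hpair : (C a * X + C b : F[X]).coeff 1 ≠ 0 ∨ (C c * X + C d : F[X]).coeff 1 ≠ 0 := by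
    rw [coeff_linear_one, coeff_linear_one]
    by_contra hcon; push_neg at hcon
    exact hdet (by rw [hcon.1, hcon.2]; ring)
  obtain ⟨hc, hd⟩ := homT_natDegree_eq (C a * X + C b) (C c * X + C d)
    (s := 1) natDegree_linear_le natDegree_linear_le hpair hf hirr hn hdf
  rw [mul_one] at hc hd
  set Q := homT (C a * X + C b) (C c * X + C d) n f with hQ
  have hQ0 : Q ≠ 0 := fun h0 => hc (by rw [h0, coeff_zero])
  have hCinv : (C (Q.coeff n)⁻¹ : F[X]) ≠ 0 := C_ne_zero.mpr (inv_ne_zero hc)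
  have hdeg2 : (mob a b c d n f).natDegree = n := by
    rw [mob, ← hQ, natDegree_mul hCinv hQ0, natDegree_C, zero_add, hd]
  refine ⟨?_, ?_, hdeg2, hc, ?_⟩
  · rw [Monic, leadingCoeff, hdeg2, mob, ← hQ, coeff_C_mul, inv_mul_cancel₀ hc]
  · rw [mob, ← hQ, irred_C_mul (inv_ne_zero hc)]
    exact M_forward a b c d hdet hn hdf hirr
  · rw [mob, ← hQ, ← mul_assoc, ← C_mul, mul_inv_cancel₀ hc, C_1, one_mul]

lemma mob_inv (a b c d : F) (hdet : a * d - b * c ≠ 0) {n : ℕ} {f : F[X]} (hn : 2 ≤ n)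
    (hf : f.Monic) (hirr : Irreducible f) (hdf : f.natDegree = n) :
    mob d (-b) (-c) a n (mob a b c d n f) = f := by
  have hpair : (C a * X + C b : F[X]).coeff 1 ≠ 0 ∨ (C c * X + C d : F[X]).coeff 1 ≠ 0 := by
    rw [coeff_linear_one, coeff_linear_one]
    by_contra hcon; push_neg at hcon
    exact hdet (by rw [hcon.1, hcon.2]; ring)
  obtain ⟨hc, hd⟩ := homT_natDegree_eq (C a * X + C b) (C c * X + C d)
    (s := 1) natDegree_linear_le natDegree_linear_le hpair hf hirr hn hdf
  rw [mul_one] at hc hd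
  set Q := homT (C a * X + C b) (C c * X + C d) n f with hQ
  have hdetn : (a * d - b * c) ^ n ≠ 0 := pow_ne_zero _ hdet
  have hscal : (Q.coeff n)⁻¹ * (a * d - b * c) ^ n ≠ 0 :=
    mul_ne_zero (inv_ne_zero hc) hdetn
  have key : homT (C d * X + C (-b)) (C (-c) * X + C a) n (mob a b c d n f)
      = C ((Q.coeff n)⁻¹ * (a * d - b * c) ^ n) * f := by
    rw [mob, ← hQ, homT_C_mul, homT_homT a b c d hdet hdf.le, ← mul_assoc, ← C_mul]
  have hcoeff : (homT (C d * X + C (-b)) (C (-c) * X + C a) n (mob a b c d n f)).coeff n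
      = (Q.coeff n)⁻¹ * (a * d - b * c) ^ n := by
    rw [key, coeff_C_mul, ← hdf, hf.coeff_natDegree, mul_one, hdf]
  rw [mob, hcoeff, key, ← mul_assoc, ← C_mul, inv_mul_cancel₀ hscal, C_1, one_mul]

lemma homT_C (G H : F[X]) (m : ℕ) (u : F) (hH : H ≠ 0) :
    homT G H m (C u) = H ^ m * C u := by
  rw [homT_pad G H (by simp : (C u : F[X]).natDegree ≤ 0) (Nat.zero_le m) hH]
  simp [homT]

lemma homT_lin_ne_zero (a b c d : F) (hdet : a * d - b * c ≠ 0) {r : ℕ} {p : F[X]}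
    (hp : p.natDegree ≤ r) (hp0 : p ≠ 0) :
    homT (C a * X + C b) (C c * X + C d) r p ≠ 0 := by
  intro h0
  have := homT_homT a b c d hdet (p := p) (m := r) hp
  rw [h0, homT_zero] at this
  rcases mul_eq_zero.mp this.symm with h1 | h1
  · exact C_ne_zero.mpr (pow_ne_zero _ hdet) h1
  · exact hp0 h1

end HomTAux
end

open HomTAux in
/-- Lemma 2: invariance of `|𝓘(g,h,n,q)|` under pre- and post-composition of `R = g/h`
with Möbius transformations `A(x) = (a₁x+b₁)/(c₁x+d₁)` and `B(x) = (a₂x+b₂)/(c₂x+d₂)`.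
Here `gA/hA` is the composite `R ∘ A` (written with the common denominator `(c₁x+d₁)^r`),
and `g'/h'` is a coprime representation of `B ∘ R ∘ A`, expressed by the cross-multiplication
identity `hfrac`. -/
theorem stmt2 {F : Type*} [Field F] [Fintype F] (g h : F[X]) (hcop : IsCoprime g h)
    (r : ℕ) (hr : 1 ≤ r) (hdeg : max g.natDegree h.natDegree = r)
    (a₁ b₁ c₁ d₁ a₂ b₂ c₂ d₂ : F)
    (hMA : a₁ * d₁ - b₁ * c₁ ≠ 0) (hMB : a₂ * d₂ - b₂ * c₂ ≠ 0)
    (gA hA g' h' : F[X])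
    (hgA : gA = ∑ i ∈ Finset.range (r + 1),
      C (g.coeff i) * (C a₁ * X + C b₁) ^ i * (C c₁ * X + C d₁) ^ (r - i))
    (hhA : hA = ∑ i ∈ Finset.range (r + 1),
      C (h.coeff i) * (C a₁ * X + C b₁) ^ i * (C c₁ * X + C d₁) ^ (r - i))
    (hcop' : IsCoprime g' h')
    (hfrac : g' * (C c₂ * gA + C d₂ * hA) = h' * (C a₂ * gA + C b₂ * hA))
    (n : ℕ) (hn : 1 < n) :
    (IrredSet g' h' n).ncard = (IrredSet g h n).ncard := by
  classical
  have hn2 : 2 ≤ n := hn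
  have hg0 : g ≠ 0 := by
    intro h0
    have h1 := natDegree_eq_zero_of_isUnit (isCoprime_zero_left.mp (h0 ▸ hcop))
    rw [h0, natDegree_zero, h1] at hdeg
    simp at hdeg
    omega
  have hh0 : h ≠ 0 := by
    intro h0
    have h1 := natDegree_eq_zero_of_isUnit (isCoprime_zero_right.mp (h0 ▸ hcop))
    rw [h0, natDegree_zero, h1] at hdeg
    simp at hdeg
    omega
  have hgle : g.natDegree ≤ r := hdeg ▸ le_max_left _ _
  have hhle : h.natDegree ≤ r := hdeg ▸ le_max_right _ _
  have hpair : g.coeff r ≠ 0 ∨ h.coeff r ≠ 0 := by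
    rcases max_cases g.natDegree h.natDegree with ⟨h1, _⟩ | ⟨h1, _⟩
    · left
      have h2 : g.natDegree = r := h1.symm.trans hdeg
      rw [← h2]
      exact fun hc => hg0 (leadingCoeff_eq_zero.mp hc)
    · right
      have h2 : h.natDegree = r := h1.symm.trans hdeg
      rw [← h2]
      exact fun hc => hh0 (leadingCoeff_eq_zero.mp hc)
  have hpair1 : c₁ ≠ 0 ∨ d₁ ≠ 0 := by
    by_contra hcon; push_neg at hcon; exact hMA (by rw [hcon.1, hcon.2]; ring)
  have hL2A : (C c₁ * X + C d₁ : F[X]) ≠ 0 := linear_ne_zero hpair1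
  have hpairH : -c₁ ≠ 0 ∨ a₁ ≠ 0 := by
    by_contra hcon; push_neg at hcon
    have hc : c₁ = 0 := by have := hcon.1; simpa using this
    exact hMA (by rw [hc, hcon.2]; ring)
  have hH1 : (C (-c₁) * X + C a₁ : F[X]) ≠ 0 := linear_ne_zero hpairH
  have hgA' : gA = homT (C a₁ * X + C b₁) (C c₁ * X + C d₁) r g := hgA
  have hhA' : hA = homT (C a₁ * X + C b₁) (C c₁ * X + C d₁) r h := hhA
  have hgA0 : gA ≠ 0 := by
    rw [hgA']; exact homT_lin_ne_zero a₁ b₁ c₁ d₁ hMA hgle hg0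
  have hhA0 : hA ≠ 0 := by
    rw [hhA']; exact homT_lin_ne_zero a₁ b₁ c₁ d₁ hMA hhle hh0
  have hAinvg : homT (C d₁ * X + C (-b₁)) (C (-c₁) * X + C a₁) r gA
      = C ((a₁ * d₁ - b₁ * c₁) ^ r) * g := by
    rw [hgA']; exact homT_homT a₁ b₁ c₁ d₁ hMA hgle
  have hAinvh : homT (C d₁ * X + C (-b₁)) (C (-c₁) * X + C a₁) r hA
      = C ((a₁ * d₁ - b₁ * c₁) ^ r) * h := by
    rw [hhA']; exact homT_homT a₁ b₁ c₁ d₁ hMA hhle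
  have hgAle : gA.natDegree ≤ r := by
    rw [hgA']
    have := homT_natDegree_le (C a₁ * X + C b₁) (C c₁ * X + C d₁)
      (s := 1) natDegree_linear_le natDegree_linear_le r g
    rwa [mul_one] at this
  have hhAle : hA.natDegree ≤ r := by
    rw [hhA']
    have := homT_natDegree_le (C a₁ * X + C b₁) (C c₁ * X + C d₁)
      (s := 1) natDegree_linear_le natDegree_linear_le r h
    rwa [mul_one] at this
  -- any common divisor of gA and hA is a unit
  have hcommon : ∀ w : F[X], w ∣ gA → w ∣ hA → IsUnit w := by
    intro w hwg hwh
    have hw0 : w ≠ 0 := by rintro rfl; exact hgA0 (zero_dvd_iff.mp hwg)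
    by_cases hs : w.natDegree = 0
    · obtain ⟨w₀, hw₀⟩ := natDegree_eq_zero.mp hs
      rw [← hw₀, isUnit_C]
      exact isUnit_iff_ne_zero.mpr (fun hcon => hw0 (by rw [← hw₀, hcon, map_zero]))
    exfalso
    have hdvd : ∀ p pA : F[X], pA ≠ 0 → pA.natDegree ≤ r →
        homT (C d₁ * X + C (-b₁)) (C (-c₁) * X + C a₁) r pA
          = C ((a₁ * d₁ - b₁ * c₁) ^ r) * p → w ∣ pA →
        homT (C d₁ * X + C (-b₁)) (C (-c₁) * X + C a₁) w.natDegree w ∣ p := by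
      intro p pA hpA0 hpAle hpinv hwpA
      obtain ⟨u, hu⟩ := hwpA
      have hu0 : u ≠ 0 := by rintro rfl; rw [mul_zero] at hu; exact hpA0 hu
      have hdm : pA.natDegree = w.natDegree + u.natDegree := by
        rw [hu, natDegree_mul hw0 hu0]
      have hudeg : u.natDegree ≤ pA.natDegree - w.natDegree := by omega
      have h5 := homT_mul (C d₁ * X + C (-b₁)) (C (-c₁) * X + C a₁)
        (m := w.natDegree) (k := pA.natDegree - w.natDegree) (u := w) (v := u)
        le_rfl hudeg hH1
      rw [show w.natDegree + (pA.natDegree - w.natDegree) = pA.natDegree by omega, ← hu] at h5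
      have hpad := homT_pad (C d₁ * X + C (-b₁)) (C (-c₁) * X + C a₁)
        (le_rfl : pA.natDegree ≤ pA.natDegree) hpAle hH1
      have hfin : C ((a₁ * d₁ - b₁ * c₁) ^ r) * p
          = (C (-c₁) * X + C a₁) ^ (r - pA.natDegree)
            * (homT (C d₁ * X + C (-b₁)) (C (-c₁) * X + C a₁) w.natDegree w
              * homT (C d₁ * X + C (-b₁)) (C (-c₁) * X + C a₁)
                  (pA.natDegree - w.natDegree) u) := by
        rw [← hpinv, hpad, h5]
      have hdvd1 : homT (C d₁ * X + C (-b₁)) (C (-c₁) * X + C a₁) w.natDegree w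
          ∣ C ((a₁ * d₁ - b₁ * c₁) ^ r) * p :=
        ⟨(C (-c₁) * X + C a₁) ^ (r - pA.natDegree)
          * homT (C d₁ * X + C (-b₁)) (C (-c₁) * X + C a₁) (pA.natDegree - w.natDegree) u,
          by rw [hfin]; ring⟩
      have hrw : p = C ((a₁ * d₁ - b₁ * c₁) ^ r)⁻¹ * (C ((a₁ * d₁ - b₁ * c₁) ^ r) * p) := by
        rw [← mul_assoc, ← C_mul, inv_mul_cancel₀ (pow_ne_zero _ hMA), C_1, one_mul]
      rw [hrw]
      exact hdvd1.mul_left _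
    have hdg := hdvd g gA hgA0 hgAle hAinvg hwg
    have hdh := hdvd h hA hhA0 hhAle hAinvh hwh
    obtain ⟨w₀, hw₀u, hw₀⟩ := Polynomial.isUnit_iff.mp (hcop.isUnit_of_dvd' hdg hdh)
    have hdetB : d₁ * a₁ - -b₁ * -c₁ ≠ 0 := by
      rw [show d₁ * a₁ - -b₁ * -c₁ = a₁ * d₁ - b₁ * c₁ by ring]; exact hMA
    have hback := homT_homT d₁ (-b₁) (-c₁) a₁ hdetB (le_rfl : w.natDegree ≤ w.natDegree)
    simp only [neg_neg] at hback
    rw [← hw₀, homT_C _ _ _ _ hL2A] at hback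
    have hw₀0 : w₀ ≠ 0 := by
      rintro rfl
      rw [map_zero, mul_zero] at hback
      rcases mul_eq_zero.mp hback.symm with h1 | h1
      · exact C_ne_zero.mpr (pow_ne_zero _ hdetB) h1
      · exact hw0 h1
    have hdegL2 : (C c₁ * X + C d₁ : F[X]).natDegree = 1 := by
      have h6 := congrArg natDegree hback
      rw [natDegree_mul (pow_ne_zero _ hL2A) (C_ne_zero.mpr hw₀0),
        natDegree_mul (C_ne_zero.mpr (pow_ne_zero _ hdetB)) hw0, natDegree_pow,
        natDegree_C, natDegree_C, add_zero, zero_add] at h6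
      rcases Nat.le_one_iff_eq_zero_or_eq_one.mp
        (natDegree_linear_le (a := c₁) (b := d₁)) with h7 | h7
      · rw [h7, mul_zero] at h6; omega
      · exact h7
    have hc₁ : c₁ ≠ 0 := by
      intro h0
      rw [h0] at hdegL2
      simp at hdegL2
    have hLw : (C c₁ * X + C d₁ : F[X]) ∣ w := by
      have hD : ((d₁ * a₁ - -b₁ * -c₁) ^ w.natDegree : F) ≠ 0 := pow_ne_zero _ hdetB
      have hw' : w = C ((d₁ * a₁ - -b₁ * -c₁) ^ w.natDegree)⁻¹
          * ((C c₁ * X + C d₁) ^ w.natDegree * C w₀) := by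
        rw [hback, ← mul_assoc, ← C_mul, inv_mul_cancel₀ hD, C_1, one_mul]
      rw [hw']
      exact ((dvd_pow_self (C c₁ * X + C d₁) hs).mul_right _).mul_left _
    have hx1 : eval (-d₁ / c₁) (C c₁ * X + C d₁ : F[X]) = 0 := by
      simp only [eval_add, eval_mul, eval_C, eval_X]
      field_simp
      ring
    have he1 : eval (-d₁ / c₁) (C a₁ * X + C b₁ : F[X]) ≠ 0 := by
      simp only [eval_add, eval_mul, eval_C, eval_X]
      intro h0
      apply hMA
      field_simp at h0
      linear_combination -h0
    have hcoeffzero : ∀ p pA : F[X], pA = homT (C a₁ * X + C b₁) (C c₁ * X + C d₁) r p →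
        w ∣ pA → p.coeff r = 0 := by
      intro p pA hpAdef hwpA
      have hgev : eval (-d₁ / c₁) pA = 0 := by
        obtain ⟨q, hq⟩ := (hLw.trans hwpA)
        rw [hq, eval_mul, hx1, zero_mul]
      rw [hpAdef, homT_eval, hx1] at hgev
      rw [Finset.sum_eq_single r] at hgev
      · rw [Nat.sub_self, pow_zero, mul_one] at hgev
        exact (mul_eq_zero.mp hgev).resolve_right (pow_ne_zero _ he1)
      · intro i hi hne
        have : i ≤ r := Finset.mem_range_succ_iff.mp hi
        rw [zero_pow (by omega : r - i ≠ 0), mul_zero]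
      · intro hmem; exact absurd (Finset.self_mem_range_succ r) hmem
    rcases hpair with hp | hp
    · exact hp (hcoeffzero g gA hgA' hwg)
    · exact hp (hcoeffzero h hA hhA' hwh)
  -- gA and hA are not both constants
  have hNBC : ∀ u v : F, gA = C u → hA = C v → False := by
    intro u v hu hv
    have h1 : C ((a₁ * d₁ - b₁ * c₁) ^ r) * g = (C (-c₁) * X + C a₁) ^ r * C u := by
      rw [← hAinvg, hu, homT_C _ _ _ _ hH1]
    have h2 : C ((a₁ * d₁ - b₁ * c₁) ^ r) * h = (C (-c₁) * X + C a₁) ^ r * C v := by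
      rw [← hAinvh, hv, homT_C _ _ _ _ hH1]
    have hu0 : u ≠ 0 := by
      rintro rfl
      rw [map_zero, mul_zero] at h1
      rcases mul_eq_zero.mp h1 with h3 | h3
      · exact C_ne_zero.mpr (pow_ne_zero _ hMA) h3
      · exact hg0 h3
    have hv0 : v ≠ 0 := by
      rintro rfl
      rw [map_zero, mul_zero] at h2
      rcases mul_eq_zero.mp h2 with h3 | h3
      · exact C_ne_zero.mpr (pow_ne_zero _ hMA) h3
      · exact hh0 h3
    have hgh : g * C v = h * C u := by
      apply mul_left_cancel₀ (C_ne_zero.mpr (pow_ne_zero r hMA))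
      calc C ((a₁ * d₁ - b₁ * c₁) ^ r) * (g * C v)
          = (C ((a₁ * d₁ - b₁ * c₁) ^ r) * g) * C v := by ring
        _ = ((C (-c₁) * X + C a₁) ^ r * C u) * C v := by rw [h1]
        _ = ((C (-c₁) * X + C a₁) ^ r * C v) * C u := by ring
        _ = (C ((a₁ * d₁ - b₁ * c₁) ^ r) * h) * C u := by rw [h2]
        _ = C ((a₁ * d₁ - b₁ * c₁) ^ r) * (h * C u) := by ring
    have hdvd1 : g ∣ h := by
      refine ⟨C (v * u⁻¹), mul_left_cancel₀ (C_ne_zero.mpr hu0) ?_⟩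
      calc C u * h = h * C u := mul_comm _ _
        _ = g * C v := hgh.symm
        _ = g * C (u * (v * u⁻¹)) := by
            congr 1
            rw [show u * (v * u⁻¹) = v by field_simp]
        _ = C u * (g * C (v * u⁻¹)) := by rw [C_mul]; ring
    have hdvd2 : h ∣ g := by
      refine ⟨C (u * v⁻¹), mul_left_cancel₀ (C_ne_zero.mpr hv0) ?_⟩
      calc C v * g = g * C v := mul_comm _ _
        _ = h * C u := hgh
        _ = h * C (v * (u * v⁻¹)) := by
            congr 1
            rw [show v * (u * v⁻¹) = u by field_simp]
        _ = C v * (h * C (u * v⁻¹)) := by rw [C_mul]; ring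
    have hgu := natDegree_eq_zero_of_isUnit (hcop.isUnit_of_dvd' dvd_rfl hdvd1)
    have hhu := natDegree_eq_zero_of_isUnit (hcop.symm.isUnit_of_dvd' dvd_rfl hdvd2)
    rw [hgu, hhu] at hdeg
    simp at hdeg
    omega
  -- g' and h' are nonzero
  have hg'0 : g' ≠ 0 := by
    intro h0
    have hh'u : h' ≠ 0 := (isCoprime_zero_left.mp (by rwa [h0] at hcop')).ne_zero
    rw [h0, zero_mul] at hfrac
    have hW0 : C a₂ * gA + C b₂ * hA = 0 := by
      rcases mul_eq_zero.mp hfrac.symm with h1 | h1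
      · exact absurd h1 hh'u
      · exact h1
    have e1 : C (a₂ * d₂ - b₂ * c₂) * gA = C (-b₂) * (C c₂ * gA + C d₂ * hA) := by
      have hkey : C (a₂ * d₂ - b₂ * c₂) * gA
          = C d₂ * (C a₂ * gA + C b₂ * hA) - C b₂ * (C c₂ * gA + C d₂ * hA) := by
        rw [map_sub, map_mul, map_mul]; ring
      rw [hkey, hW0, mul_zero, zero_sub, map_neg, neg_mul]
    have e2 : C (a₂ * d₂ - b₂ * c₂) * hA = C a₂ * (C c₂ * gA + C d₂ * hA) := by
      have hkey : C (a₂ * d₂ - b₂ * c₂) * hA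
          = C a₂ * (C c₂ * gA + C d₂ * hA) - C c₂ * (C a₂ * gA + C b₂ * hA) := by
        rw [map_sub, map_mul, map_mul]; ring
      rw [hkey, hW0, mul_zero, sub_zero]
    have hgAeq : gA = C (a₂ * d₂ - b₂ * c₂)⁻¹ * (C (-b₂) * (C c₂ * gA + C d₂ * hA)) := by
      rw [← e1, ← mul_assoc, ← C_mul, inv_mul_cancel₀ hMB, C_1, one_mul]
    have hhAeq : hA = C (a₂ * d₂ - b₂ * c₂)⁻¹ * (C a₂ * (C c₂ * gA + C d₂ * hA)) := by
      rw [← e2, ← mul_assoc, ← C_mul, inv_mul_cancel₀ hMB, C_1, one_mul]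
    obtain ⟨w₀, hw₀u, hw₀⟩ := Polynomial.isUnit_iff.mp (hcommon (C c₂ * gA + C d₂ * hA)
      ⟨C (a₂ * d₂ - b₂ * c₂)⁻¹ * C (-b₂), by
        conv_lhs => rw [hgAeq]
        ring⟩
      ⟨C (a₂ * d₂ - b₂ * c₂)⁻¹ * C a₂, by
        conv_lhs => rw [hhAeq]
        ring⟩)
    refine hNBC ((a₂ * d₂ - b₂ * c₂)⁻¹ * (-b₂ * w₀)) ((a₂ * d₂ - b₂ * c₂)⁻¹ * (a₂ * w₀)) ?_ ?_
    · rw [hgAeq, ← hw₀, ← C_mul, ← C_mul]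
    · rw [hhAeq, ← hw₀, ← C_mul, ← C_mul]
  have hh'0 : h' ≠ 0 := by
    intro h0
    have hg'u : g' ≠ 0 := (isCoprime_zero_right.mp (by rwa [h0] at hcop')).ne_zero
    rw [h0, zero_mul] at hfrac
    have hW0 : C c₂ * gA + C d₂ * hA = 0 := by
      rcases mul_eq_zero.mp hfrac with h1 | h1
      · exact absurd h1 hg'u
      · exact h1
    have e1 : C (a₂ * d₂ - b₂ * c₂) * gA = C d₂ * (C a₂ * gA + C b₂ * hA) := by
      have hkey : C (a₂ * d₂ - b₂ * c₂) * gA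
          = C d₂ * (C a₂ * gA + C b₂ * hA) - C b₂ * (C c₂ * gA + C d₂ * hA) := by
        rw [map_sub, map_mul, map_mul]; ring
      rw [hkey, hW0, mul_zero, sub_zero]
    have e2 : C (a₂ * d₂ - b₂ * c₂) * hA = C (-c₂) * (C a₂ * gA + C b₂ * hA) := by
      have hkey : C (a₂ * d₂ - b₂ * c₂) * hA
          = C a₂ * (C c₂ * gA + C d₂ * hA) - C c₂ * (C a₂ * gA + C b₂ * hA) := by
        rw [map_sub, map_mul, map_mul]; ring
      rw [hkey, hW0, mul_zero, zero_sub, map_neg, neg_mul]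
    have hgAeq : gA = C (a₂ * d₂ - b₂ * c₂)⁻¹ * (C d₂ * (C a₂ * gA + C b₂ * hA)) := by
      rw [← e1, ← mul_assoc, ← C_mul, inv_mul_cancel₀ hMB, C_1, one_mul]
    have hhAeq : hA = C (a₂ * d₂ - b₂ * c₂)⁻¹ * (C (-c₂) * (C a₂ * gA + C b₂ * hA)) := by
      rw [← e2, ← mul_assoc, ← C_mul, inv_mul_cancel₀ hMB, C_1, one_mul]
    obtain ⟨w₀, hw₀u, hw₀⟩ := Polynomial.isUnit_iff.mp (hcommon (C a₂ * gA + C b₂ * hA)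
      ⟨C (a₂ * d₂ - b₂ * c₂)⁻¹ * C d₂, by
        conv_lhs => rw [hgAeq]
        ring⟩
      ⟨C (a₂ * d₂ - b₂ * c₂)⁻¹ * C (-c₂), by
        conv_lhs => rw [hhAeq]
        ring⟩)
    refine hNBC ((a₂ * d₂ - b₂ * c₂)⁻¹ * (d₂ * w₀)) ((a₂ * d₂ - b₂ * c₂)⁻¹ * (-c₂ * w₀)) ?_ ?_
    · rw [hgAeq, ← hw₀, ← C_mul, ← C_mul]
    · rw [hhAeq, ← hw₀, ← C_mul, ← C_mul]
  -- extract the constant k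
  have hg'dvd : g' ∣ C a₂ * gA + C b₂ * hA :=
    hcop'.dvd_of_dvd_mul_left ⟨C c₂ * gA + C d₂ * hA, hfrac.symm⟩
  obtain ⟨w, hw⟩ := hg'dvd
  have h2 : C c₂ * gA + C d₂ * hA = h' * w := by
    apply mul_left_cancel₀ hg'0
    rw [hfrac, hw]; ring
  have ewg : C (a₂ * d₂ - b₂ * c₂) * gA = (C d₂ * g' - C b₂ * h') * w := by
    have hkey : C (a₂ * d₂ - b₂ * c₂) * gA
        = C d₂ * (C a₂ * gA + C b₂ * hA) - C b₂ * (C c₂ * gA + C d₂ * hA) := by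
      rw [map_sub, map_mul, map_mul]; ring
    rw [hkey, hw, h2]; ring
  have ewh : C (a₂ * d₂ - b₂ * c₂) * hA = (C a₂ * h' - C c₂ * g') * w := by
    have hkey : C (a₂ * d₂ - b₂ * c₂) * hA
        = C a₂ * (C c₂ * gA + C d₂ * hA) - C c₂ * (C a₂ * gA + C b₂ * hA) := by
      rw [map_sub, map_mul, map_mul]; ring
    rw [hkey, hw, h2]; ring
  have hwdg : w ∣ gA := by
    have hgAeq : gA = C (a₂ * d₂ - b₂ * c₂)⁻¹ * ((C d₂ * g' - C b₂ * h') * w) := by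
      rw [← ewg, ← mul_assoc, ← C_mul, inv_mul_cancel₀ hMB, C_1, one_mul]
    exact ⟨C (a₂ * d₂ - b₂ * c₂)⁻¹ * (C d₂ * g' - C b₂ * h'), by rw [hgAeq]; ring⟩
  have hwdh : w ∣ hA := by
    have hhAeq : hA = C (a₂ * d₂ - b₂ * c₂)⁻¹ * ((C a₂ * h' - C c₂ * g') * w) := by
      rw [← ewh, ← mul_assoc, ← C_mul, inv_mul_cancel₀ hMB, C_1, one_mul]
    exact ⟨C (a₂ * d₂ - b₂ * c₂)⁻¹ * (C a₂ * h' - C c₂ * g'), by rw [hhAeq]; ring⟩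
  obtain ⟨k, hku, hkC⟩ := Polynomial.isUnit_iff.mp (hcommon w hwdg hwdh)
  have hk0 : k ≠ 0 := hku.ne_zero
  have e1 : C a₂ * gA + C b₂ * hA = g' * C k := by rw [hw, hkC]
  have e2 : C c₂ * gA + C d₂ * hA = h' * C k := by rw [h2, hkC]
  -- reduction 1 : IrredSet gA hA n = IrredSet g h n
  have hratT : ∀ (G H f : F[X]), ratTransform G H f = homT G H f.natDegree f :=
    fun _ _ _ => rfl
  have hcore : ∀ f : F[X], f.Monic → Irreducible f → f.natDegree = n →
      (Irreducible (ratTransform gA hA f) ↔ Irreducible (ratTransform g h f)) := by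
    intro f hfm hfi hfd
    obtain ⟨hPc, hPd⟩ := homT_natDegree_eq g h hgle hhle hpair hfm hfi hn2 hfd
    have hI : ratTransform gA hA f
        = homT (C a₁ * X + C b₁) (C c₁ * X + C d₁) (n * r) (homT g h n f) := by
      rw [hratT gA hA f, hfd, hgA', hhA']
      exact transform_comp g h hgle hhle hh0 a₁ b₁ c₁ d₁ hMA hfd.le
    have hev : c₁ = 0 ∨ eval (a₁ / c₁) (homT g h n f) ≠ 0 := by
      by_cases hc : c₁ = 0
      · exact Or.inl hc
      right
      rw [homT_eval]
      have hpr : eval (a₁ / c₁) g ≠ 0 ∨ eval (a₁ / c₁) h ≠ 0 := by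
        by_contra hcon; push_neg at hcon
        obtain ⟨u, v, huv⟩ := hcop
        have hzo := congrArg (eval (a₁ / c₁)) huv
        rw [eval_add, eval_mul, eval_mul, hcon.1, hcon.2, mul_zero, mul_zero,
          add_zero, eval_one] at hzo
        exact zero_ne_one hzo
      rw [← hfd]
      exact binform_ne_zero hfm hfi (by omega) _ _ hpr
    have hm2 : 2 ≤ n * r := by
      calc 2 ≤ n := hn2
        _ = n * 1 := (mul_one n).symm
        _ ≤ n * r := Nat.mul_le_mul_left n hr
    have hQd := homT_lin_natDegree_eq a₁ b₁ c₁ d₁ hMA (by omega) hPd hev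
    have hiff := M_iff a₁ b₁ c₁ d₁ hMA hm2 hPd hQd
    rw [hI, hratT g h f, hfd]
    exact hiff
  have hsetEq : IrredSet gA hA n = IrredSet g h n := by
    ext f
    simp only [IrredSet, Set.mem_setOf_eq]
    constructor
    · rintro ⟨h1, h2, h3, h4⟩; exact ⟨h1, h2, h3, (hcore f h1 h2 h3).mp h4⟩
    · rintro ⟨h1, h2, h3, h4⟩; exact ⟨h1, h2, h3, (hcore f h1 h2 h3).mpr h4⟩
  -- reduction 2 : key equivalence
  have hkey : ∀ f : F[X], f.Monic → Irreducible f → f.natDegree = n →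
      (Irreducible (ratTransform g' h' f)
        ↔ Irreducible (ratTransform gA hA (mob a₂ b₂ c₂ d₂ n f))) := by
    intro f hfm hfi hfd
    obtain ⟨hm1, hm2, hm3, hc, hm4⟩ := mob_spec a₂ b₂ c₂ d₂ hMB hn2 hfm hfi hfd
    have hII := transform_post gA hA g' h' hhA0 hh'0 a₂ b₂ c₂ d₂ k hk0 e1 e2 hfd.le
    rw [hm4, homT_C_mul] at hII
    rw [hratT g' h' f, hfd, hratT gA hA _, hm3]
    rw [← irred_C_mul (pow_ne_zero n hk0) (homT g' h' n f), ← hII, irred_C_mul hc]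
  -- the bijection
  have hMB' : d₂ * a₂ - -b₂ * -c₂ ≠ 0 := by
    rw [show d₂ * a₂ - -b₂ * -c₂ = a₂ * d₂ - b₂ * c₂ by ring]; exact hMB
  have hmem1 : ∀ f ∈ IrredSet g' h' n, mob a₂ b₂ c₂ d₂ n f ∈ IrredSet gA hA n := by
    intro f hf
    simp only [IrredSet, Set.mem_setOf_eq] at hf ⊢
    obtain ⟨h1, h2, h3, h4⟩ := hf
    obtain ⟨hm1, hm2, hm3, -, -⟩ := mob_spec a₂ b₂ c₂ d₂ hMB hn2 h1 h2 h3
    exact ⟨hm1, hm2, hm3, (hkey f h1 h2 h3).mp h4⟩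
  have hinv1 : ∀ f ∈ IrredSet g' h' n,
      mob d₂ (-b₂) (-c₂) a₂ n (mob a₂ b₂ c₂ d₂ n f) = f := by
    intro f hf
    simp only [IrredSet, Set.mem_setOf_eq] at hf
    obtain ⟨h1, h2, h3, -⟩ := hf
    exact mob_inv a₂ b₂ c₂ d₂ hMB hn2 h1 h2 h3
  have hback : ∀ q ∈ IrredSet gA hA n,
      mob d₂ (-b₂) (-c₂) a₂ n q ∈ IrredSet g' h' n
        ∧ mob a₂ b₂ c₂ d₂ n (mob d₂ (-b₂) (-c₂) a₂ n q) = q := by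
    intro q hq
    simp only [IrredSet, Set.mem_setOf_eq] at hq ⊢
    obtain ⟨h1, h2, h3, h4⟩ := hq
    obtain ⟨hm1, hm2, hm3, -, -⟩ := mob_spec d₂ (-b₂) (-c₂) a₂ hMB' hn2 h1 h2 h3
    have hΦΨ : mob a₂ b₂ c₂ d₂ n (mob d₂ (-b₂) (-c₂) a₂ n q) = q := by
      have := mob_inv d₂ (-b₂) (-c₂) a₂ hMB' hn2 h1 h2 h3
      simpa only [neg_neg] using this
    refine ⟨⟨hm1, hm2, hm3, ?_⟩, hΦΨ⟩
    rw [hkey _ hm1 hm2 hm3, hΦΨ]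
    exact h4
  have himg : mob a₂ b₂ c₂ d₂ n '' (IrredSet g' h' n) = IrredSet gA hA n := by
    ext q
    constructor
    · rintro ⟨f, hf, rfl⟩; exact hmem1 f hf
    · intro hq; exact ⟨_, (hback q hq).1, (hback q hq).2⟩
  have hinj : (IrredSet g' h' n).InjOn (mob a₂ b₂ c₂ d₂ n) := by
    intro x hx y hy hxy
    rw [← hinv1 x hx, ← hinv1 y hy, hxy]
  rw [← hsetEq, ← himg, Set.ncard_image_of_injOn hinj]
end

section
/- Let g(x), h(x) ∈ F_q[x] be coprime with g monic of degree 3 and deg h ≤ 2, and let n ≥ 1. Then |Ū(n,q)| = (2q^n + A − B − 2C − 2D)/3, where A is the number of distinct roots of h(x) in F_{q^n}; B is the number of β ∈ F_{q^n} for which g(x) − β h(x) has a double root and a distinct simple root in F_{q^n}; C is the number of β ∈ F_{q^n} for which g(x) − β h(x) has a triple root in F_{q^n}; and D is the number of β ∈ F_{q^n} for which g(x) − β h(x) has an irreducible quadratic factor in F_{q^n}[x]. -/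
open Polynomial Finset

namespace Stmt4Aux

variable {E : Type*} [Field E]

lemma isUnit_of_natDegree_eq_zero {a : E[X]} (ha : a ≠ 0) (h : a.natDegree = 0) :
    IsUnit a := by
  have := Polynomial.eq_C_of_natDegree_eq_zero h
  rw [this]
  refine Polynomial.isUnit_C.mpr (isUnit_iff_ne_zero.mpr ?_)
  intro hc
  exact ha (by rw [this, hc, map_zero])

lemma no_root_of_irr {f : E[X]} (hf : Irreducible f) (h2 : 2 ≤ f.natDegree) (x : E) :
    ¬ f.IsRoot x := by
  intro hx
  obtain ⟨k, hk⟩ := Polynomial.dvd_iff_isRoot.mpr hx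
  rcases hf.isUnit_or_isUnit hk with h | h
  · exact Polynomial.not_isUnit_X_sub_C x h
  · have hk0 : k ≠ 0 := by
      rintro rfl
      rw [mul_zero] at hk
      exact hf.ne_zero hk
    have : f.natDegree = 1 := by
      rw [hk, Polynomial.natDegree_mul (Polynomial.X_sub_C_ne_zero x) hk0,
        Polynomial.natDegree_X_sub_C, Polynomial.natDegree_eq_zero_of_isUnit h]
    omega

lemma root_iff_of_natDegree_eq_one {p : E[X]} (hp : p.natDegree = 1) :
    ∃ x, ∀ w, p.IsRoot w ↔ w = x := by
  obtain ⟨a, ha, b, rfl⟩ := Polynomial.natDegree_eq_one.mp hp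
  refine ⟨-b / a, fun w => ?_⟩
  simp only [IsRoot, eval_add, eval_mul, eval_C, eval_X]
  constructor
  · intro h
    field_simp
    linear_combination h
  · rintro rfl
    field_simp
    ring

lemma exists_root_of_not_irr {f : E[X]} (hm : f.Monic) (hd2 : 2 ≤ f.natDegree)
    (hd3 : f.natDegree ≤ 3) (hf : ¬ Irreducible f) : ∃ x, f.IsRoot x := by
  have hf0 : f ≠ 0 := hm.ne_zero
  have hnu : ¬ IsUnit f := by
    intro h
    have := Polynomial.natDegree_eq_zero_of_isUnit h
    omega
  rw [irreducible_iff] at hf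
  push_neg at hf
  obtain ⟨a, b, hab, ha, hb⟩ := hf hnu
  have ha0 : a ≠ 0 := by rintro rfl; rw [zero_mul] at hab; exact hf0 hab
  have hb0 : b ≠ 0 := by rintro rfl; rw [mul_zero] at hab; exact hf0 hab
  have h1 : 1 ≤ a.natDegree := by
    rcases Nat.eq_zero_or_pos a.natDegree with h | h
    · exact absurd (isUnit_of_natDegree_eq_zero ha0 h) ha
    · exact h
  have h2 : 1 ≤ b.natDegree := by
    rcases Nat.eq_zero_or_pos b.natDegree with h | h
    · exact absurd (isUnit_of_natDegree_eq_zero hb0 h) hb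
    · exact h
  have hsum : a.natDegree + b.natDegree = f.natDegree := by
    rw [hab, Polynomial.natDegree_mul ha0 hb0]
  rcases Nat.lt_or_ge a.natDegree 2 with h | h
  · have : a.natDegree = 1 := by omega
    obtain ⟨x, hx⟩ := root_iff_of_natDegree_eq_one this
    exact ⟨x, by simp only [IsRoot, hab, eval_mul]; exact mul_eq_zero.mpr (Or.inl ((hx x).mpr rfl))⟩
  · have : b.natDegree = 1 := by omega
    obtain ⟨x, hx⟩ := root_iff_of_natDegree_eq_one this
    exact ⟨x, by simp only [IsRoot, hab, eval_mul]; exact mul_eq_zero.mpr (Or.inr ((hx x).mpr rfl))⟩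

lemma classify {f : E[X]} (hm : f.Monic) (hd : f.natDegree = 3) :
    Irreducible f ∨ (∃ u : E[X], Irreducible u ∧ u.natDegree = 2 ∧ u ∣ f) ∨
      ∃ x y z : E, f = (X - C x) * (X - C y) * (X - C z) := by
  by_cases hf : Irreducible f
  · exact Or.inl hf
  right
  obtain ⟨x, hx⟩ := exists_root_of_not_irr hm (by omega) (by omega) hf
  obtain ⟨k, hk⟩ := Polynomial.dvd_iff_isRoot.mpr hx
  have hkm : k.Monic := (monic_X_sub_C x).of_mul_monic_left (hk ▸ hm)
  have hk0 : k ≠ 0 := hkm.ne_zero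
  have hk2 : k.natDegree = 2 := by
    have := hd
    rw [hk, Polynomial.natDegree_mul (Polynomial.X_sub_C_ne_zero x) hk0,
      Polynomial.natDegree_X_sub_C] at this
    omega
  by_cases hki : Irreducible k
  · exact Or.inl ⟨k, hki, hk2, ⟨X - C x, by rw [hk, mul_comm]⟩⟩
  · right
    obtain ⟨y, hy⟩ := exists_root_of_not_irr hkm (by omega) (by omega) hki
    obtain ⟨l, hl⟩ := Polynomial.dvd_iff_isRoot.mpr hy
    have hlm : l.Monic := (monic_X_sub_C y).of_mul_monic_left (hl ▸ hkm)
    have hl1 : l.natDegree = 1 := by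
      have := hk2
      rw [hl, Polynomial.natDegree_mul (Polynomial.X_sub_C_ne_zero y) hlm.ne_zero,
        Polynomial.natDegree_X_sub_C] at this
      omega
    obtain ⟨c, hc⟩ : ∃ c, l = X + C c := ⟨_, hlm.eq_X_add_C hl1⟩
    refine ⟨x, y, -c, ?_⟩
    rw [hk, hl, hc, map_neg, sub_neg_eq_add, mul_assoc]

lemma quad_not_dvd {u : E[X]} (hu : Irreducible u) (h2 : u.natDegree = 2) (x y z : E) :
    ¬ u ∣ (X - C x) * (X - C y) * (X - C z) := by
  intro hd
  have hp : Prime u := UniqueFactorizationMonoid.irreducible_iff_prime.mp hu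
  have hle : ∀ w : E, u ∣ (X - C w) → False := fun w hw => by
    have := Polynomial.natDegree_le_of_dvd hw (Polynomial.X_sub_C_ne_zero w)
    rw [Polynomial.natDegree_X_sub_C] at this
    omega
  rcases hp.2.2 _ _ hd with h | h
  · rcases hp.2.2 _ _ h with h | h
    · exact hle x h
    · exact hle y h
  · exact hle z h

lemma double_ne_triple {x y z : E} (hxy : x ≠ y) :
    (X - C x) ^ 2 * (X - C y) ≠ (X - C z) ^ 3 := by
  intro e
  have hy : y = z := by
    have h0 := congrArg (eval y) e
    simp only [eval_mul, eval_pow, eval_sub, eval_X, eval_C, sub_self, mul_zero] at h0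
    exact sub_eq_zero.mp (pow_eq_zero_iff (by norm_num : (3:ℕ) ≠ 0) |>.mp h0.symm)
  have hx : x = z := by
    have h1 : (x - z) ^ 3 = 0 := by
      have h0 := congrArg (eval x) e
      simp only [eval_mul, eval_pow, eval_sub, eval_X, eval_C, sub_self] at h0
      linear_combination -h0
    exact sub_eq_zero.mp (pow_eq_zero_iff (by norm_num : (3:ℕ) ≠ 0) |>.mp h1)
  exact hxy (hx.trans hy.symm)

lemma irr_no_quad {f u : E[X]} (hf : Irreducible f) (hdf : f.natDegree = 3)
    (hu : Irreducible u) (h2 : u.natDegree = 2) : ¬ u ∣ f := by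
  rintro ⟨v, hv⟩
  rcases hf.isUnit_or_isUnit hv with h | h
  · exact hu.not_isUnit h
  · have hv0 : v ≠ 0 := by
      rintro rfl
      rw [mul_zero] at hv
      exact hf.ne_zero hv
    have := hdf
    rw [hv, Polynomial.natDegree_mul hu.ne_zero hv0,
      Polynomial.natDegree_eq_zero_of_isUnit h] at this
    omega

lemma roots_three (x y z : E) :
    {w : E | IsRoot ((X - C x) * (X - C y) * (X - C z)) w} = {x, y, z} := by
  ext w
  simp only [Set.mem_setOf_eq, IsRoot, eval_mul, eval_sub, eval_X, eval_C, mul_eq_zero,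
    sub_eq_zero, Set.mem_insert_iff, Set.mem_singleton_iff]
  tauto

lemma roots_double (x y : E) :
    {w : E | IsRoot ((X - C x) ^ 2 * (X - C y)) w} = {x, y} := by
  ext w
  simp only [Set.mem_setOf_eq, IsRoot, eval_mul, eval_pow, eval_sub, eval_X, eval_C,
    mul_eq_zero, pow_eq_zero_iff (by norm_num : (2:ℕ) ≠ 0), sub_eq_zero,
    Set.mem_insert_iff, Set.mem_singleton_iff]

lemma roots_triple (x : E) : {w : E | IsRoot ((X - C x) ^ 3) w} = {x} := by
  ext w
  simp only [Set.mem_setOf_eq, IsRoot, eval_pow, eval_sub, eval_X, eval_C,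
    pow_eq_zero_iff (by norm_num : (3:ℕ) ≠ 0), sub_eq_zero, Set.mem_singleton_iff]

lemma roots_quadcase {f u : E[X]} (hm : f.Monic) (hd : f.natDegree = 3)
    (hu : Irreducible u) (h2 : u.natDegree = 2) (hdvd : u ∣ f) :
    ∃ x, {w : E | f.IsRoot w} = {x} := by
  obtain ⟨v, hv⟩ := hdvd
  have hv0 : v ≠ 0 := by
    rintro rfl
    rw [mul_zero] at hv
    exact hm.ne_zero hv
  have hv1 : v.natDegree = 1 := by
    have := hd
    rw [hv, Polynomial.natDegree_mul hu.ne_zero hv0] at this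
    omega
  obtain ⟨x, hx⟩ := root_iff_of_natDegree_eq_one hv1
  refine ⟨x, ?_⟩
  ext w
  simp only [Set.mem_setOf_eq, Set.mem_singleton_iff, IsRoot, hv, eval_mul, mul_eq_zero]
  constructor
  · rintro (h | h)
    · exact absurd h (no_root_of_irr hu (by omega) w)
    · exact (hx w).mp h
  · intro h
    exact Or.inr ((hx w).mpr h)

lemma roots_irr {f : E[X]} (hf : Irreducible f) (hd : f.natDegree = 3) :
    {w : E | f.IsRoot w} = ∅ := by
  ext w
  simp only [Set.mem_setOf_eq, Set.mem_empty_iff_false, iff_false]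
  exact no_root_of_irr hf (by omega) w

end Stmt4Aux





/-- `Ū(m,q)`: the set of `β` in the extension `E` (a field with `q^m` elements)
such that `g(x) − β h(x)` is irreducible over `E`. -/
noncomputable def Ubar {F : Type*} [Field F] (g h : F[X]) (E : Type*) [Field E]
    [Algebra F E] : Set E :=
  {β | Irreducible (g.map (algebraMap F E) - C β * h.map (algebraMap F E))}

/-- Lemma 4: `|Ū(n,q)| = (2q^n + A − B − 2C − 2D)/3`, where
`A` is the number of distinct roots of `h` in `F_{q^n}`,
`B` counts `β` for which `g − βh` has a double root and a distinct simple root in `F_{q^n}`,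
`C` counts `β` for which `g − βh` has a triple root in `F_{q^n}`,
`D` counts `β` for which `g − βh` has an irreducible quadratic factor over `F_{q^n}`. -/
theorem stmt4 {F : Type*} [Field F] [Fintype F] (q : ℕ) (hq : Fintype.card F = q)
    (g h : F[X]) (hg : g.Monic) (hgdeg : g.natDegree = 3) (hhdeg : h.natDegree ≤ 2)
    (hcop : IsCoprime g h)
    (n : ℕ) (hn : 1 ≤ n)
    (E : Type*) [Field E] [Algebra F E] [Fintype E] (hE : Fintype.card E = q ^ n)
    (nA nB nC nD : ℕ)
    (hA : nA = {x : E | (Polynomial.aeval x) h = 0}.ncard)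
    (hB : nB = {β : E | ∃ x y : E, x ≠ y ∧
        g.map (algebraMap F E) - C β * h.map (algebraMap F E)
          = (X - C x) ^ 2 * (X - C y)}.ncard)
    (hC : nC = {β : E | ∃ x : E,
        g.map (algebraMap F E) - C β * h.map (algebraMap F E)
          = (X - C x) ^ 3}.ncard)
    (hD : nD = {β : E | ∃ u : E[X], Irreducible u ∧ u.natDegree = 2 ∧
        u ∣ (g.map (algebraMap F E) - C β * h.map (algebraMap F E))}.ncard) :
    ((Ubar g h E).ncard : ℚ) =
      (2 * (q : ℚ) ^ n + nA - nB - 2 * nC - 2 * nD) / 3 := by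
  
  classical
  have hgm : (g.map (algebraMap F E)).Monic := hg.map _
  have hgd : (g.map (algebraMap F E)).natDegree = 3 := by
    rw [hg.natDegree_map]; exact hgdeg
  have hhd : ∀ β : E, (C β * h.map (algebraMap F E)).natDegree ≤ 2 := by
    intro β
    refine le_trans natDegree_mul_le ?_
    rw [natDegree_C, zero_add]
    exact le_trans natDegree_map_le hhdeg
  have hm : ∀ β : E, (g.map (algebraMap F E) - C β * h.map (algebraMap F E)).Monic := by
    intro β
    refine hgm.sub_of_left ?_
    have h2 : (C β * h.map (algebraMap F E)).degree ≤ (2 : ℕ) :=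
      natDegree_le_iff_degree_le.mp (hhd β)
    have h3 : (g.map (algebraMap F E)).degree = ((3 : ℕ) : WithBot ℕ) := by
      rw [degree_eq_natDegree hgm.ne_zero, hgd]
    rw [h3]
    exact lt_of_le_of_lt h2 (by exact_mod_cast (by norm_num : (2:ℕ) < 3))
  have hd3 : ∀ β : E,
      (g.map (algebraMap F E) - C β * h.map (algebraMap F E)).natDegree = 3 := by
    intro β
    rw [natDegree_sub_eq_left_of_natDegree_lt
      (by rw [hgd]; exact lt_of_le_of_lt (hhd β) (by norm_num)), hgd]
  have hroot : ∀ β x : E,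
      (g.map (algebraMap F E) - C β * h.map (algebraMap F E)).IsRoot x ↔
        aeval x g - β * aeval x h = 0 := by
    intro β x
    simp [IsRoot, eval_sub, eval_mul, eval_C, eval_map, aeval_def]
  have hnb : ∀ x : E, aeval x h = 0 → aeval x g ≠ 0 := by
    intro x hh hg0
    obtain ⟨a, b, hab⟩ := hcop
    have h1 : (aeval x) (a * g + b * h) = 1 := by rw [hab, map_one]
    rw [map_add, map_mul, map_mul, hh, hg0, mul_zero, mul_zero, add_zero] at h1
    exact zero_ne_one h1
  have hglue : ∀ P : E → Prop, {w : E | P w}.ncard = #(univ.filter fun w => P w) := by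
    intro P
    rw [← Set.ncard_coe_finset]
    congr 1
    ext w
    simp
  set SU : Finset E := univ.filter
    (fun β => Irreducible (g.map (algebraMap F E) - C β * h.map (algebraMap F E)))
    with hSUdef
  set SB : Finset E := univ.filter (fun β => ∃ x y : E, x ≠ y ∧
      g.map (algebraMap F E) - C β * h.map (algebraMap F E) = (X - C x) ^ 2 * (X - C y))
    with hSBdef
  set SC : Finset E := univ.filter (fun β => ∃ x : E,
      g.map (algebraMap F E) - C β * h.map (algebraMap F E) = (X - C x) ^ 3)
    with hSCdef
  set SD : Finset E := univ.filter (fun β => ∃ u : E[X], Irreducible u ∧ u.natDegree = 2 ∧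
      u ∣ (g.map (algebraMap F E) - C β * h.map (algebraMap F E)))
    with hSDdef
  have hdBC : Disjoint SB SC := by
    rw [Finset.disjoint_left]
    intro β h1 h2
    rw [hSBdef, mem_filter] at h1
    rw [hSCdef, mem_filter] at h2
    obtain ⟨-, x, y, hxy, e1⟩ := h1
    obtain ⟨-, z, e2⟩ := h2
    exact Stmt4Aux.double_ne_triple hxy (e1.symm.trans e2)
  have hdBD : Disjoint SB SD := by
    rw [Finset.disjoint_left]
    intro β h1 h2
    rw [hSBdef, mem_filter] at h1
    rw [hSDdef, mem_filter] at h2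
    obtain ⟨-, x, y, hxy, e1⟩ := h1
    obtain ⟨-, u, hu, hu2, hdvd⟩ := h2
    refine Stmt4Aux.quad_not_dvd hu hu2 x x y ?_
    rw [show (X - C x) * (X - C x) * (X - C y) = (X - C x) ^ 2 * (X - C y) by ring, ← e1]
    exact hdvd
  have hdCD : Disjoint SC SD := by
    rw [Finset.disjoint_left]
    intro β h1 h2
    rw [hSCdef, mem_filter] at h1
    rw [hSDdef, mem_filter] at h2
    obtain ⟨-, z, e1⟩ := h1
    obtain ⟨-, u, hu, hu2, hdvd⟩ := h2
    refine Stmt4Aux.quad_not_dvd hu hu2 z z z ?_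
    rw [show (X - C z) * (X - C z) * (X - C z) = (X - C z) ^ 3 by ring, ← e1]
    exact hdvd
  have hdBU : Disjoint SB SU := by
    rw [Finset.disjoint_left]
    intro β h1 h2
    rw [hSBdef, mem_filter] at h1
    rw [hSUdef, mem_filter] at h2
    obtain ⟨-, x, y, hxy, e1⟩ := h1
    obtain ⟨-, hirr⟩ := h2
    refine Stmt4Aux.no_root_of_irr hirr (by rw [hd3 β]; norm_num) x ?_
    rw [e1]
    simp [IsRoot]
  have hdCU : Disjoint SC SU := by
    rw [Finset.disjoint_left]
    intro β h1 h2
    rw [hSCdef, mem_filter] at h1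
    rw [hSUdef, mem_filter] at h2
    obtain ⟨-, z, e1⟩ := h1
    obtain ⟨-, hirr⟩ := h2
    refine Stmt4Aux.no_root_of_irr hirr (by rw [hd3 β]; norm_num) z ?_
    rw [e1]
    simp [IsRoot]
  have hdDU : Disjoint SD SU := by
    rw [Finset.disjoint_left]
    intro β h1 h2
    rw [hSDdef, mem_filter] at h1
    rw [hSUdef, mem_filter] at h2
    obtain ⟨-, u, hu, hu2, hdvd⟩ := h1
    obtain ⟨-, hirr⟩ := h2
    exact Stmt4Aux.irr_no_quad hirr (hd3 β) hu hu2 hdvd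
  have hd_BC_D : Disjoint (SB ∪ SC) SD := Finset.disjoint_union_left.mpr ⟨hdBD, hdCD⟩
  have hd_BCD_U : Disjoint (SB ∪ SC ∪ SD) SU :=
    Finset.disjoint_union_left.mpr
      ⟨Finset.disjoint_union_left.mpr ⟨hdBU, hdCU⟩, hdDU⟩
  set U4 : Finset E := SB ∪ SC ∪ SD ∪ SU with hU4def
  have hU4card : U4.card = SB.card + SC.card + SD.card + SU.card := by
    rw [hU4def, card_union_of_disjoint hd_BCD_U, card_union_of_disjoint hd_BC_D,
      card_union_of_disjoint hdBC]
  set REST : Finset E := univ \ U4 with hRESTdef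
  have hsplitcard : REST.card + U4.card = q ^ n := by
    rw [hRESTdef, ← hE, ← Finset.card_univ]
    exact Finset.card_sdiff_add_card_eq_card (Finset.subset_univ _)
  have hrest : ∀ β ∈ REST, ∃ x y z : E, x ≠ y ∧ x ≠ z ∧ y ≠ z ∧
      g.map (algebraMap F E) - C β * h.map (algebraMap F E)
        = (X - C x) * (X - C y) * (X - C z) := by
    intro β hβ
    rw [hRESTdef, Finset.mem_sdiff, hU4def] at hβ
    obtain ⟨-, hβ⟩ := hβ
    simp only [Finset.mem_union, not_or] at hβ
    obtain ⟨⟨⟨hnB2, hnC2⟩, hnD2⟩, hnU2⟩ := hβ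
    simp only [hSBdef, mem_filter, mem_univ, true_and] at hnB2
    simp only [hSCdef, mem_filter, mem_univ, true_and] at hnC2
    simp only [hSDdef, mem_filter, mem_univ, true_and] at hnD2
    simp only [hSUdef, mem_filter, mem_univ, true_and] at hnU2
    rcases Stmt4Aux.classify (hm β) (hd3 β) with hirr | ⟨u, hu, h2, hdvd⟩ | ⟨x, y, z, hfac⟩
    · exact absurd hirr hnU2
    · exact absurd ⟨u, hu, h2, hdvd⟩ hnD2
    · by_cases hxy : x = y
      · subst hxy
        by_cases hxz : x = z
        · subst hxz
          exact absurd ⟨x, by rw [hfac]; ring⟩ hnC2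
        · exact absurd ⟨x, z, hxz, by rw [hfac]; ring⟩ hnB2
      · by_cases hxz : x = z
        · subst hxz
          exact absurd ⟨x, y, hxy, by rw [hfac]; ring⟩ hnB2
        · by_cases hyz : y = z
          · subst hyz
            exact absurd ⟨y, x, Ne.symm hxy, by rw [hfac]; ring⟩ hnB2
          · exact ⟨x, y, z, hxy, hxz, hyz, hfac⟩
  set R : E → ℕ := fun β =>
    {x : E | (g.map (algebraMap F E) - C β * h.map (algebraMap F E)).IsRoot x}.ncard
    with hRdef
  have hR3 : ∀ β ∈ REST, R β = 3 := by
    intro β hβ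
    obtain ⟨x, y, z, hxy, hxz, hyz, hfac⟩ := hrest β hβ
    simp only [hRdef]
    rw [hfac, Stmt4Aux.roots_three,
      Set.ncard_insert_of_notMem (by simp [hxy, hxz]) (Set.toFinite _),
      Set.ncard_pair hyz]
  have hRB : ∀ β ∈ SB, R β = 2 := by
    intro β hβ
    rw [hSBdef, mem_filter] at hβ
    obtain ⟨-, x, y, hxy, e1⟩ := hβ
    simp only [hRdef]
    rw [e1, Stmt4Aux.roots_double, Set.ncard_pair hxy]
  have hRC : ∀ β ∈ SC, R β = 1 := by
    intro β hβ
    rw [hSCdef, mem_filter] at hβ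
    obtain ⟨-, z, e1⟩ := hβ
    simp only [hRdef]
    rw [e1, Stmt4Aux.roots_triple, Set.ncard_singleton]
  have hRD : ∀ β ∈ SD, R β = 1 := by
    intro β hβ
    rw [hSDdef, mem_filter] at hβ
    obtain ⟨-, u, hu, hu2, hdvd⟩ := hβ
    obtain ⟨x, hx⟩ := Stmt4Aux.roots_quadcase (hm β) (hd3 β) hu hu2 hdvd
    simp only [hRdef]
    rw [hx, Set.ncard_singleton]
  have hRU : ∀ β ∈ SU, R β = 0 := by
    intro β hβ
    rw [hSUdef, mem_filter] at hβ
    obtain ⟨-, hirr⟩ := hβ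
    simp only [hRdef]
    rw [Stmt4Aux.roots_irr hirr (hd3 β), Set.ncard_empty]
  have hsumREST : ∑ β ∈ REST, R β = 3 * REST.card := by
    rw [Finset.sum_congr rfl hR3, Finset.sum_const, smul_eq_mul, mul_comm]
  have hsumSB : ∑ β ∈ SB, R β = 2 * SB.card := by
    rw [Finset.sum_congr rfl hRB, Finset.sum_const, smul_eq_mul, mul_comm]
  have hsumSC : ∑ β ∈ SC, R β = SC.card := by
    rw [Finset.sum_congr rfl hRC, Finset.sum_const, smul_eq_mul, mul_one]
  have hsumSD : ∑ β ∈ SD, R β = SD.card := by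
    rw [Finset.sum_congr rfl hRD, Finset.sum_const, smul_eq_mul, mul_one]
  have hsumSU : ∑ β ∈ SU, R β = 0 := by
    rw [Finset.sum_congr rfl hRU, Finset.sum_const, smul_eq_mul, mul_zero]
  have hsumU4 : ∑ β ∈ U4, R β = 2 * SB.card + SC.card + SD.card := by
    rw [hU4def, Finset.sum_union hd_BCD_U, Finset.sum_union hd_BC_D,
      Finset.sum_union hdBC, hsumSB, hsumSC, hsumSD, hsumSU, add_zero]
  have hsumuniv : ∑ β ∈ univ, R β = 3 * REST.card + (2 * SB.card + SC.card + SD.card) := by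
    rw [← Finset.sum_sdiff (Finset.subset_univ U4), ← hRESTdef, hsumREST, hsumU4]
  have hRfilter : ∀ β : E, R β = #(univ.filter fun x : E => aeval x g - β * aeval x h = 0) := by
    intro β
    simp only [hRdef]
    rw [hglue]
    congr 1
    exact Finset.filter_congr fun x _ => hroot β x
  have hA' : nA = #(univ.filter fun x : E => aeval x h = 0) := by rw [hA, hglue]
  have hcount : ∑ β ∈ univ, R β + nA = q ^ n := by
    have e1 : ∑ β ∈ univ, R β
        = ∑ x : E, ∑ β : E, (if aeval x g - β * aeval x h = 0 then 1 else 0) := by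
      rw [Finset.sum_comm]
      exact Finset.sum_congr rfl fun β _ => by rw [hRfilter β, Finset.card_filter]
    have e2 : ∀ x : E, (∑ β : E, (if aeval x g - β * aeval x h = 0 then 1 else 0))
        = (if aeval x h = 0 then 0 else 1) := by
      intro x
      by_cases hx : aeval x h = 0
      · rw [if_pos hx]
        refine Finset.sum_eq_zero fun β _ => ?_
        rw [if_neg]
        intro hc
        rw [hx, mul_zero, sub_zero] at hc
        exact hnb x hx hc
      · rw [if_neg hx]
        have hiff : ∀ β : E, (aeval x g - β * aeval x h = 0) ↔ (β = aeval x g / aeval x h) := by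
          intro β
          rw [sub_eq_zero, eq_div_iff hx]
          constructor
          · intro h1
            linear_combination -h1
          · intro h1
            linear_combination -h1
        rw [Finset.sum_congr rfl fun β _ => if_congr (hiff β) rfl rfl]
        simp
    have e3 : ∑ x : E, (if aeval x h = 0 then 0 else 1)
        = #(univ.filter fun x : E => ¬ aeval x h = 0) := by
      rw [Finset.card_filter]
      exact Finset.sum_congr rfl fun x _ => by by_cases hx : aeval x h = 0 <;> simp [hx]
    have e4 : #(univ.filter fun x : E => aeval x h = 0)
        + #(univ.filter fun x : E => ¬ aeval x h = 0) = q ^ n := by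
      rw [Finset.card_filter_add_card_filter_not, Finset.card_univ, hE]
    rw [e1, Finset.sum_congr rfl fun x _ => e2 x, e3, hA']
    omega
  have hUn : (Ubar g h E).ncard = SU.card := by
    have hUb : Ubar g h E = {β : E |
        Irreducible (g.map (algebraMap F E) - C β * h.map (algebraMap F E))} := rfl
    rw [hUb, hglue, hSUdef]
    try rfl
  have hnBc : nB = SB.card := by
    rw [hB, ← Set.ncard_coe_finset SB]
    congr 1
    rw [hSBdef]
    ext w
    simp
  have hnCc : nC = SC.card := by
    rw [hC, ← Set.ncard_coe_finset SC]
    congr 1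
    rw [hSCdef]
    ext w
    simp
  have hnDc : nD = SD.card := by rw [hD, hglue, hSDdef]; try rfl
  have hfin2 := hcount
  rw [hsumuniv] at hfin2
  have hfin1 : REST.card + (SB.card + SC.card + SD.card + SU.card) = q ^ n := by
    rw [← hU4card]
    exact hsplitcard
  have c1 : (REST.card : ℚ) + ((SB.card : ℚ) + SC.card + SD.card + SU.card) = (q : ℚ) ^ n := by
    have := congrArg (Nat.cast (R := ℚ)) hfin1
    push_cast at this
    linarith [this]
  have c2 : 3 * (REST.card : ℚ) + (2 * (SB.card : ℚ) + SC.card + SD.card) + nA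
      = (q : ℚ) ^ n := by
    have := congrArg (Nat.cast (R := ℚ)) hfin2
    push_cast at this
    linarith [this]
  rw [hUn, hnBc, hnCc, hnDc, eq_div_iff (by norm_num : (3:ℚ) ≠ 0)]
  linarith [c1, c2]
end

section
/- Let K be an arbitrary field and let p(x) = x^3 + a x^2 + b x + c ∈ K[x] be a separable cubic polynomial. Then the Galois group of p over K, viewed as a group of permutations of its three roots in a splitting field, is contained in the alternating group A_3 if and only if the quadratic resolvent x^2 + (ab − 3c)x + (a^3 c + b^3 + 9c^2 − 6abc) is reducible over K. -/
open Polynomial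

lemma aux_sign {α : Type*} [Fintype α] [DecidableEq α] (h : Fintype.card α = 3)
    (π : Equiv.Perm α) : Equiv.Perm.sign π = 1 ↔ π ^ 3 = 1 := by
  constructor
  · intro hs
    have hnt : Nontrivial α := Fintype.one_lt_card_iff_nontrivial.mp (by omega)
    have hmem : π ∈ alternatingGroup α := Equiv.Perm.mem_alternatingGroup.mpr hs
    have hcard : Fintype.card (alternatingGroup α) = 3 := by
      have h2 := two_mul_card_alternatingGroup (α := α)
      rw [Fintype.card_perm, h] at h2
      have h6 : (3:ℕ).factorial = 6 := rfl
      omega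
    have : (⟨π, hmem⟩ : alternatingGroup α) ^ 3 = 1 := by
      rw [← hcard]; exact pow_card_eq_one
    have := congrArg (Subtype.val) this
    simpa using this
  · intro hs
    have : (Equiv.Perm.sign π) ^ 3 = 1 := by
      rw [← map_pow, hs, map_one]
    rcases Int.units_eq_one_or (Equiv.Perm.sign π) with h1 | h1
    · exact h1
    · rw [h1] at this; exact absurd this (by decide)

lemma cubic_coeffs {R : Type*} [CommRing R] [Nontrivial R] {A B C' A' B' C'' : R}
    (h : (X : R[X]) ^ 3 + C A * X ^ 2 + C B * X + C C' =
      X ^ 3 + C A' * X ^ 2 + C B' * X + C C'') : A = A' ∧ B = B' ∧ C' = C'' := by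
  refine ⟨?_, ?_, ?_⟩
  · have := congrArg (fun q => Polynomial.coeff q 2) h
    simpa [coeff_X_pow] using this
  · have := congrArg (fun q => Polynomial.coeff q 1) h
    simpa [coeff_X_pow] using this
  · have := congrArg (fun q => Polynomial.coeff q 0) h
    simpa [coeff_X_pow] using this

/-- Theorem (Kaplansky/Conrad): a separable cubic `x³ + ax² + bx + c` over an arbitrary
field `K` has Galois group contained in the alternating group `A₃` (i.e. every element of
the Galois group induces an even permutation of the three roots) if and only if its
quadratic resolvent `x² + (ab − 3c)x + (a³c + b³ + 9c² − 6abc)` is reducible over `K`. -/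
theorem stmt5 {K : Type*} [Field K] (a b c : K)
    (p : K[X]) (hp : p = X ^ 3 + C a * X ^ 2 + C b * X + C c)
    (hsep : p.Separable) :
    (∀ φ : p.Gal,
        @Equiv.Perm.sign _ (Classical.decEq _) _
          (@Polynomial.Gal.galActionHom K _ p p.SplittingField _ _
            ⟨SplittingField.splits p⟩ φ) = 1) ↔
      ¬ Irreducible (X ^ 2 + C (a * b - 3 * c) * X
          + C (a ^ 3 * c + b ^ 3 + 9 * c ^ 2 - 6 * a * b * c)) := by
  have hmonic : p.Monic := by rw [hp]; monicity!
  have hdeg : p.natDegree = 3 := by rw [hp]; compute_degree!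
  set L := p.SplittingField with hL
  have hsplits := SplittingField.splits p
  haveI hF : Fact ((p.map (algebraMap K L)).Splits) := ⟨hsplits⟩
  have hcard : Multiset.card (p.map (algebraMap K L)).roots = 3 := by
    rw [← hsplits.natDegree_eq_card_roots, natDegree_map, hdeg]
  obtain ⟨r1, r2, r3, hs⟩ := Multiset.card_eq_three.mp hcard
  have hnodup := nodup_roots (hsep.map (f := algebraMap K L))
  rw [hs] at hnodup
  have h12 : r1 ≠ r2 := by intro h; subst h; simp at hnodup
  have h13 : r1 ≠ r3 := by intro h; subst h; simp at hnodup
  have h23 : r2 ≠ r3 := by intro h; subst h; simp at hnodup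
  have hprod : p.map (algebraMap K L) = (X - C r1) * (X - C r2) * (X - C r3) := by
    have := hsplits.eq_prod_roots_of_monic (hmonic.map (algebraMap K L))
    rw [this, hs]
    simp [Multiset.map_cons, Multiset.prod_cons, mul_assoc]
  have hmap : p.map (algebraMap K L) = X ^ 3 + C (algebraMap K L a) * X ^ 2
      + C (algebraMap K L b) * X + C (algebraMap K L c) := by
    have := congrArg (map (algebraMap K L)) hp
    simpa [Polynomial.map_add, Polynomial.map_mul, Polynomial.map_pow] using this
  have hexp : (X - C r1) * (X - C r2) * (X - C r3) =
      X ^ 3 + C (-(r1 + r2 + r3)) * X ^ 2 + C (r1 * r2 + r1 * r3 + r2 * r3) * X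
        + C (-(r1 * r2 * r3)) := by
    simp only [C_neg, C_add, C_mul]; ring
  obtain ⟨hA, hB, hC⟩ := cubic_coeffs (hmap.symm.trans (hprod.trans hexp))
  set Θ := r1 ^ 2 * r2 + r2 ^ 2 * r3 + r3 ^ 2 * r1 with hΘ
  set Θ' := r1 * r2 ^ 2 + r2 * r3 ^ 2 + r3 * r1 ^ 2 with hΘ'
  have hne : Θ ≠ Θ' := by
    intro h
    have h0 : (r1 - r2) * ((r2 - r3) * (r3 - r1)) = 0 := by linear_combination -h
    rcases mul_eq_zero.mp h0 with h' | h'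
    · exact h12 (sub_eq_zero.mp h')
    · rcases mul_eq_zero.mp h' with h'' | h''
      · exact h23 (sub_eq_zero.mp h'')
      · exact h13 (sub_eq_zero.mp h'').symm
  have hr1 : aeval r1 p = 0 := by
    rw [aeval_def, ← eval_map, hprod]; simp
  have hr2 : aeval r2 p = 0 := by
    rw [aeval_def, ← eval_map, hprod]; simp
  have hr3 : aeval r3 p = 0 := by
    rw [aeval_def, ← eval_map, hprod]; simp
  have hroots : ∀ x : L, aeval x p = 0 → (x = r1 ∨ x = r2 ∨ x = r3) := by
    intro x hx
    have hx' : eval x (p.map (algebraMap K L)) = 0 := by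
      rwa [eval_map, ← aeval_def]
    rw [hprod] at hx'
    simp only [eval_mul, eval_sub, eval_X, eval_C, mul_eq_zero, sub_eq_zero] at hx'
    tauto
  have hφroot : ∀ (φ : p.Gal) (x : L), aeval x p = 0 → aeval (φ x) p = 0 := by
    intro φ x hx
    have h2 := aeval_algHom_apply (AlgHomClass.toAlgHom φ : L →ₐ[K] L) x p
    rw [hx, map_zero] at h2
    exact h2
  have hfix : ∀ ψ : p.Gal, ψ r1 = r1 → ψ r2 = r2 → ψ r3 = r3 → ψ = 1 := by
    intro ψ e1 e2 e3
    apply Polynomial.Gal.ext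
    intro x hx
    have hx0 : aeval x p = 0 := (mem_rootSet.mp hx).2
    rcases hroots x hx0 with rfl | rfl | rfl <;>
      · simp only [e1, e2, e3]
        rfl
  have hpow : ∀ (φ : p.Gal) (x : L), (φ ^ 3) x = φ (φ (φ x)) := fun φ x => rfl
  have key : ∀ φ : p.Gal, (φ ^ 3 = 1 ↔ φ Θ = Θ) := by
    intro φ
    have m1 := hroots (φ r1) (hφroot φ r1 hr1)
    have m2 := hroots (φ r2) (hφroot φ r2 hr2)
    have m3 := hroots (φ r3) (hφroot φ r3 hr3)
    rcases m1 with h1 | h1 | h1 <;> rcases m2 with h2 | h2 | h2 <;>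
      rcases m3 with h3 | h3 | h3 <;>
      first
      | exact absurd (φ.injective (h1.trans h2.symm)) h12
      | exact absurd (φ.injective (h1.trans h3.symm)) h13
      | exact absurd (φ.injective (h2.trans h3.symm)) h23
      | ((refine iff_of_true (hfix _ ?_ ?_ ?_) ?_ <;>
          simp only [hpow, map_add, map_mul, map_pow, h1, h2, h3, hΘ, hΘ'] <;>
          try ring); done)
      | (refine iff_of_false ?_ ?_
         · intro hone
           have e1 : (φ ^ 3) r1 = r1 := by rw [hone]; rfl
           have e2 : (φ ^ 3) r2 = r2 := by rw [hone]; rfl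
           simp only [hpow, h1, h2, h3] at e1 e2
           first
           | exact h12 e1.symm
           | exact h13 e1.symm
           | exact h23 e2.symm
           | exact h12 e2
         · intro hτ
           apply hne
           have hc : φ Θ = Θ' := by
             simp only [hΘ, hΘ', map_add, map_mul, map_pow, h1, h2, h3]; ring
           exact (hc.symm.trans hτ).symm)
  -- Galois theory part
  haveI : IsGalois K L := IsGalois.of_separable_splitting_field hsep
  have main2 : (∀ φ : p.Gal, φ Θ = Θ) ↔ Θ ∈ Set.range (algebraMap K L) := by
    constructor
    · intro h
      have hbotfix : IntermediateField.fixingSubgroup (⊥ : IntermediateField K L) = ⊤ := by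
        ext φ
        simp only [Subgroup.mem_top, iff_true]
        intro x
        rcases x with ⟨x, hx⟩
        obtain ⟨t, rfl⟩ := IntermediateField.mem_bot.mp hx
        exact φ.commutes t
      have hff : IntermediateField.fixedField (⊤ : Subgroup (L ≃ₐ[K] L)) =
          (⊥ : IntermediateField K L) := by
        rw [← hbotfix, IsGalois.fixedField_fixingSubgroup]
      have : Θ ∈ IntermediateField.fixedField (⊤ : Subgroup (L ≃ₐ[K] L)) :=
        fun g => h g.1
      rw [hff] at this
      exact IntermediateField.mem_bot.mp this
    · rintro ⟨t, ht⟩ φ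
      rw [← ht]
      exact φ.commutes t
  -- resolvent part
  have hPv : algebraMap K L (a * b - 3 * c) = -(Θ + Θ') := by
    have : algebraMap K L (a * b - 3 * c)
        = algebraMap K L a * algebraMap K L b - 3 * algebraMap K L c := by
      simp [map_sub, map_mul, map_ofNat]
    rw [this, hA, hB, hC, hΘ, hΘ']; ring
  have hQv : algebraMap K L (a ^ 3 * c + b ^ 3 + 9 * c ^ 2 - 6 * a * b * c) = Θ * Θ' := by
    have : algebraMap K L (a ^ 3 * c + b ^ 3 + 9 * c ^ 2 - 6 * a * b * c)
        = (algebraMap K L a) ^ 3 * algebraMap K L c + (algebraMap K L b) ^ 3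
          + 9 * (algebraMap K L c) ^ 2
          - 6 * algebraMap K L a * algebraMap K L b * algebraMap K L c := by
      simp [map_sub, map_add, map_mul, map_pow, map_ofNat]
    rw [this, hA, hB, hC, hΘ, hΘ']; ring
  set q : K[X] := X ^ 2 + C (a * b - 3 * c) * X
      + C (a ^ 3 * c + b ^ 3 + 9 * c ^ 2 - 6 * a * b * c) with hq
  have hqm : q.Monic := by rw [hq]; monicity!
  have hqd : q.natDegree = 2 := by rw [hq]; compute_degree!
  have hq0 : q.coeff 0 = a ^ 3 * c + b ^ 3 + 9 * c ^ 2 - 6 * a * b * c := by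
    rw [hq]
    simp only [coeff_add, coeff_X_pow, coeff_C_mul, coeff_X_zero, coeff_C]
    norm_num
  have hq1 : q.coeff 1 = a * b - 3 * c := by
    rw [hq]
    simp only [coeff_add, coeff_X_pow, coeff_C_mul, coeff_X_one, coeff_C]
    norm_num
  have main3 : Θ ∈ Set.range (algebraMap K L) ↔ ¬ Irreducible q := by
    rw [hqm.not_irreducible_iff_exists_add_mul_eq_coeff hqd]
    constructor
    · rintro ⟨t, ht⟩
      have hroott : t ^ 2 + (a * b - 3 * c) * t
          + (a ^ 3 * c + b ^ 3 + 9 * c ^ 2 - 6 * a * b * c) = 0 := by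
        apply (algebraMap K L).injective
        rw [map_add, map_add, map_mul, map_pow, ht, hPv, hQv, map_zero]
        ring
      refine ⟨-t, (a * b - 3 * c) + t, ?_, ?_⟩
      · rw [hq0]; linear_combination hroott
      · rw [hq1]; ring
    · rintro ⟨c1, c2, e0, e1⟩
      rw [hq0] at e0
      rw [hq1] at e1
      have hsum : algebraMap K L c1 + algebraMap K L c2 = -(Θ + Θ') := by
        rw [← map_add, ← e1, hPv]
      have hmul : algebraMap K L c1 * algebraMap K L c2 = Θ * Θ' := by
        rw [← map_mul, ← e0, hQv]
      have hzero : (Θ + algebraMap K L c1) * (Θ + algebraMap K L c2) = 0 := by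
        linear_combination Θ * hsum + hmul
      rcases mul_eq_zero.mp hzero with h' | h'
      · exact ⟨-c1, by rw [map_neg]; linear_combination -h'⟩
      · exact ⟨-c2, by rw [map_neg]; linear_combination -h'⟩
  -- sign part
  have hcard3 : Fintype.card (p.rootSet L) = 3 :=
    (card_rootSet_eq_natDegree hsep hsplits).trans hdeg
  have main1 : ∀ φ : p.Gal,
      (@Equiv.Perm.sign _ (Classical.decEq _) _
        (Polynomial.Gal.galActionHom p L φ) = 1) ↔ φ Θ = Θ := by
    intro φ
    rw [@aux_sign _ _ (Classical.decEq _) hcard3 (Polynomial.Gal.galActionHom p L φ),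
      ← map_pow]
    rw [show (1 : Equiv.Perm (p.rootSet L)) = Polynomial.Gal.galActionHom p L 1 from
      (map_one _).symm]
    rw [(Polynomial.Gal.galActionHom_injective p L).eq_iff]
    exact key φ
  constructor
  · intro h
    exact main3.mp (main2.mp fun φ => (main1 φ).mp (h φ))
  · intro h φ
    exact (main1 φ).mpr (main2.mpr (main3.mpr h) φ)
end

section
/- Let g(x), h(x) ∈ F_q[x] be coprime with g monic of degree 3 and deg h ≤ 2, and let n ≥ 1. Then |Ū(n,q)| = (N + A − C)/3, where A is the number of distinct roots of h(x) in F_{q^n}; C is the number of β ∈ F_{q^n} for which g(x) − β h(x) has a triple root in F_{q^n}; and N is the number of pairs (x, β) ∈ F_{q^n} × F_{q^n} satisfying x^2 + s(β)x + t(β) = 0, where x^2 + s(β)x + t(β) denotes the quadratic resolvent of the monic cubic g(x) − β h(x). -/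
open Polynomial
open scoped Classical
set_option linter.unusedSectionVars false
set_option maxHeartbeats 1000000

namespace CubicAux

section MultisetLemmas
variable {K : Type*}

lemma multiset_pair_eq {a b x y : K} (h : ({a, b} : Multiset K) = {x, y}) :
    (a = x ∧ b = y) ∨ (a = y ∧ b = x) := by
  have ha : a ∈ ({x, y} : Multiset K) := by rw [← h]; simp
  simp only [Multiset.insert_eq_cons, Multiset.mem_cons, Multiset.mem_singleton] at ha
  simp only [Multiset.insert_eq_cons] at h
  rcases ha with rfl | rfl
  · left
    refine ⟨rfl, ?_⟩
    have h' : ({b} : Multiset K) = {y} := (Multiset.cons_inj_right a).mp h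
    exact Multiset.singleton_inj.mp h'
  · right
    refine ⟨rfl, ?_⟩
    rw [show ({a} : Multiset K) = a ::ₘ 0 from (Multiset.cons_zero a).symm,
      Multiset.cons_swap x a 0, Multiset.cons_zero] at h
    have h' : ({b} : Multiset K) = {x} := (Multiset.cons_inj_right a).mp h
    exact Multiset.singleton_inj.mp h'

lemma tswap12 (a b c : K) : ({a, b, c} : Multiset K) = {b, a, c} :=
  Multiset.cons_swap a b {c}

lemma tswap23 (a b c : K) : ({a, b, c} : Multiset K) = {a, c, b} :=
  congrArg (a ::ₘ ·) (Multiset.cons_swap b c {})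

lemma multiset_triple_eq {a b c x y z : K} (h : ({a, b, c} : Multiset K) = {x, y, z}) :
    (a = x ∧ b = y ∧ c = z) ∨ (a = x ∧ b = z ∧ c = y) ∨
    (a = y ∧ b = x ∧ c = z) ∨ (a = y ∧ b = z ∧ c = x) ∨
    (a = z ∧ b = x ∧ c = y) ∨ (a = z ∧ b = y ∧ c = x) := by
  have ha : a ∈ ({x, y, z} : Multiset K) := by rw [← h]; simp
  simp only [Multiset.insert_eq_cons, Multiset.mem_cons, Multiset.mem_singleton] at ha
  rcases ha with rfl | rfl | rfl
  · have h' : ({b, c} : Multiset K) = {y, z} := (Multiset.cons_inj_right a).mp h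
    rcases multiset_pair_eq h' with ⟨rfl, rfl⟩ | ⟨rfl, rfl⟩
    · exact Or.inl ⟨rfl, rfl, rfl⟩
    · exact Or.inr (Or.inl ⟨rfl, rfl, rfl⟩)
  · rw [tswap12 x a z] at h
    have h' : ({b, c} : Multiset K) = {x, z} := (Multiset.cons_inj_right a).mp h
    rcases multiset_pair_eq h' with ⟨rfl, rfl⟩ | ⟨rfl, rfl⟩
    · exact Or.inr (Or.inr (Or.inl ⟨rfl, rfl, rfl⟩))
    · exact Or.inr (Or.inr (Or.inr (Or.inl ⟨rfl, rfl, rfl⟩)))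
  · rw [tswap23 x y a, tswap12 x a y] at h
    have h' : ({b, c} : Multiset K) = {x, y} := (Multiset.cons_inj_right a).mp h
    rcases multiset_pair_eq h' with ⟨rfl, rfl⟩ | ⟨rfl, rfl⟩
    · exact Or.inr (Or.inr (Or.inr (Or.inr (Or.inl ⟨rfl, rfl, rfl⟩))))
    · exact Or.inr (Or.inr (Or.inr (Or.inr (Or.inr ⟨rfl, rfl, rfl⟩))))

end MultisetLemmas

section TwoFields
variable {E K : Type*} [Field E] [Field K]

lemma ncard_preimage (ι : E →+* K) (S : Set K) :
    (ι ⁻¹' S).ncard = (S ∩ Set.range ι).ncard := by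
  rw [← Set.image_preimage_eq_inter_range, Set.ncard_image_of_injective _ ι.injective]

lemma irred_iff_no_root (f : E[X]) (h3 : f.natDegree = 3) :
    Irreducible f ↔ ∀ x : E, ¬ f.IsRoot x := by
  have h0 : f ≠ 0 := fun h => by simp [h] at h3
  rw [irreducible_iff_roots_eq_zero_of_degree_le_three (by omega) (by omega)]
  constructor
  · intro h x hx
    have : x ∈ f.roots := by rwa [mem_roots h0]
    simp [h] at this
  · intro h
    by_contra hne
    obtain ⟨x, hx⟩ := Multiset.exists_mem_of_ne_zero hne
    exact h x ((mem_roots h0).mp hx)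




lemma mem_range_iff_pow_card [Fintype E] (ι : E →+* K) (y : K) :
    (∃ x : E, ι x = y) ↔ y ^ (Fintype.card E) = y := by
  constructor
  · rintro ⟨x, rfl⟩
    rw [← map_pow, FiniteField.pow_card]
  · intro hy
    set Q := Fintype.card E with hQ
    have hQ2 : 1 < Q := Fintype.one_lt_card
    have hd : (X ^ Q - X : K[X]).natDegree = Q := by
      rw [natDegree_sub_eq_left_of_natDegree_lt] <;>
        simp [natDegree_X_pow, natDegree_X, hQ2]
    have hW0 : (X ^ Q - X : K[X]) ≠ 0 := fun h => by simp [h] at hd; omega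
    have hsub : (Finset.univ.image ι) ⊆ (X ^ Q - X : K[X]).roots.toFinset := by
      intro z hz
      simp only [Finset.mem_image] at hz
      obtain ⟨x, -, rfl⟩ := hz
      rw [Multiset.mem_toFinset, mem_roots hW0]
      simp only [IsRoot, eval_sub, eval_pow, eval_X]
      rw [← map_pow, FiniteField.pow_card, sub_self]
    have hcards : (X ^ Q - X : K[X]).roots.toFinset.card ≤ (Finset.univ.image ι).card := by
      rw [Finset.card_image_of_injective _ ι.injective, Finset.card_univ]
      exact le_trans (Multiset.toFinset_card_le _) (le_trans (card_roots' _) (le_of_eq hd))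
    have heq := Finset.eq_of_subset_of_card_le hsub hcards
    have hymem : y ∈ (X ^ Q - X : K[X]).roots.toFinset := by
      rw [Multiset.mem_toFinset, mem_roots hW0]
      simp [IsRoot, hy]
    rw [← heq] at hymem
    simp only [Finset.mem_image] at hymem
    obtain ⟨x, -, hx⟩ := hymem
    exact ⟨x, hx⟩

lemma coeff_facts (ι : E →+* K) (f : E[X]) (r1 r2 r3 : K)
    (hprod : f.map ι = (X - C r1) * (X - C r2) * (X - C r3)) :
    ι (f.coeff 2) = -(r1 + r2 + r3) ∧ ι (f.coeff 1) = (r1*r2 + r1*r3 + r2*r3) ∧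
      ι (f.coeff 0) = -(r1*r2*r3) := by
  have h : f.map ι = X^3 - C (r1+r2+r3) * X^2 + C (r1*r2+r1*r3+r2*r3) * X - C (r1*r2*r3) := by
    rw [hprod]; simp only [C_add, C_mul]; ring
  refine ⟨?_, ?_, ?_⟩
  · have := congrArg (fun p => Polynomial.coeff p 2) h
    simpa [coeff_map, coeff_C_mul, coeff_X_pow, coeff_C, add_mul] using this
  · have := congrArg (fun p => Polynomial.coeff p 1) h
    simpa [coeff_map, coeff_C_mul, coeff_X_pow, coeff_C, add_mul] using this
  · have := congrArg (fun p => Polynomial.coeff p 0) h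
    simpa [coeff_map, coeff_C_mul, coeff_X_pow, coeff_C, add_mul] using this

lemma rootset (ι : E →+* K) (f : E[X]) (r1 r2 r3 : K)
    (hprod : f.map ι = (X - C r1) * (X - C r2) * (X - C r3)) :
    {x : E | f.eval x = 0} = ι ⁻¹' {r1, r2, r3} := by
  ext x
  simp only [Set.mem_setOf_eq, Set.mem_preimage, Set.mem_insert_iff, Set.mem_singleton_iff]
  have h1 : ι (f.eval x) = (f.map ι).eval (ι x) := by
    rw [eval_map, eval₂_at_apply]
  rw [hprod] at h1
  simp only [eval_mul, eval_sub, eval_X, eval_C] at h1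
  constructor
  · intro hx
    have : (ι x - r1) * (ι x - r2) * (ι x - r3) = 0 := by rw [← h1, hx, map_zero]
    rcases mul_eq_zero.mp this with h | h
    · rcases mul_eq_zero.mp h with h | h
      · exact Or.inl (sub_eq_zero.mp h)
      · exact Or.inr (Or.inl (sub_eq_zero.mp h))
    · exact Or.inr (Or.inr (sub_eq_zero.mp h))
  · intro hx
    have : ι (f.eval x) = 0 := by
      rw [h1]
      rcases hx with rfl | rfl | rfl <;> ring
    exact (_root_.map_eq_zero ι).mp this

lemma quadset (ι : E →+* K) (f : E[X]) (r1 r2 r3 : K)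
    (hprod : f.map ι = (X - C r1) * (X - C r2) * (X - C r3)) :
    {x : E | x^2 + (f.coeff 2 * f.coeff 1 - 3 * f.coeff 0) * x
        + (f.coeff 2 ^ 3 * f.coeff 0 + f.coeff 1 ^ 3 + 9 * f.coeff 0 ^ 2
          - 6 * f.coeff 2 * f.coeff 1 * f.coeff 0) = 0}
      = ι ⁻¹' {r1^2*r2 + r2^2*r3 + r3^2*r1, r1*r2^2 + r2*r3^2 + r3*r1^2} := by
  obtain ⟨h2, h1, h0⟩ := coeff_facts ι f r1 r2 r3 hprod
  ext x
  simp only [Set.mem_setOf_eq, Set.mem_preimage, Set.mem_insert_iff, Set.mem_singleton_iff]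
  have hkey : ι (x^2 + (f.coeff 2 * f.coeff 1 - 3 * f.coeff 0) * x
        + (f.coeff 2 ^ 3 * f.coeff 0 + f.coeff 1 ^ 3 + 9 * f.coeff 0 ^ 2
          - 6 * f.coeff 2 * f.coeff 1 * f.coeff 0))
      = (ι x - (r1^2*r2 + r2^2*r3 + r3^2*r1)) * (ι x - (r1*r2^2 + r2*r3^2 + r3*r1^2)) := by
    simp only [map_add, map_mul, map_sub, map_pow, map_ofNat]
    rw [h2, h1, h0]; ring
  constructor
  · intro hx
    have h' : (ι x - (r1^2*r2 + r2^2*r3 + r3^2*r1)) * (ι x - (r1*r2^2 + r2*r3^2 + r3*r1^2)) = 0 := by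
      rw [← hkey, hx, map_zero]
    rcases mul_eq_zero.mp h' with h | h
    · exact Or.inl (sub_eq_zero.mp h)
    · exact Or.inr (sub_eq_zero.mp h)
  · intro hx
    refine (_root_.map_eq_zero ι).mp ?_
    rw [hkey]
    rcases hx with h | h <;> rw [h] <;> ring

lemma eq_of_trip (ι : E →+* K) (f : E[X]) {x : E} (hfx : f = (X - C x)^3) (r1 r2 r3 : K)
    (hprod : f.map ι = (X - C r1) * (X - C r2) * (X - C r3)) :
    r1 = ι x ∧ r2 = ι x ∧ r3 = ι x := by
  have hm : (X - C r1) * (X - C r2) * (X - C r3) = (X - C (ι x))^3 := by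
    rw [← hprod, hfx]
    simp [Polynomial.map_pow]
  refine ⟨?_, ?_, ?_⟩
  · have := congrArg (eval r1) hm
    simp only [eval_mul, eval_pow, eval_sub, eval_X, eval_C, sub_self, zero_mul, mul_zero] at this
    exact sub_eq_zero.mp (pow_eq_zero_iff (by norm_num)|>.mp this.symm)
  · have := congrArg (eval r2) hm
    simp only [eval_mul, eval_pow, eval_sub, eval_X, eval_C, sub_self, zero_mul, mul_zero] at this
    exact sub_eq_zero.mp (pow_eq_zero_iff (by norm_num)|>.mp this.symm)
  · have := congrArg (eval r3) hm
    simp only [eval_mul, eval_pow, eval_sub, eval_X, eval_C, sub_self, zero_mul, mul_zero] at this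
    exact sub_eq_zero.mp (pow_eq_zero_iff (by norm_num)|>.mp this.symm)




/-- the common conclusion -/
def CL (f : Polynomial E) : Prop :=
  {x : E | x^2 + (f.coeff 2 * f.coeff 1 - 3 * f.coeff 0) * x
      + (f.coeff 2 ^ 3 * f.coeff 0 + f.coeff 1 ^ 3 + 9 * f.coeff 0 ^ 2
        - 6 * f.coeff 2 * f.coeff 1 * f.coeff 0) = 0}.ncard + 1
  = 3 * (if Irreducible f then 1 else 0) + (if ∃ x : E, f = (X - C x)^3 then 1 else 0)
    + {x : E | f.eval x = 0}.ncard

variable (ι : E →+* K) (φ : K →+* K) (hfix : ∀ y : K, (∃ x : E, ι x = y) ↔ φ y = y)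
lemma not_irreducible_of_root (f : E[X]) (h3 : f.natDegree = 3) {x : E} (hx : f.IsRoot x) :
    ¬ Irreducible f := fun hirr => (irred_iff_no_root f h3).mp hirr x hx

include hfix

lemma caseTriple (f : E[X]) (h3 : f.natDegree = 3) (r : K)
    (hprod : f.map ι = (X - C r) * (X - C r) * (X - C r)) (hr : φ r = r) : CL f := by
  obtain ⟨x0, hx0⟩ := (hfix r).mpr hr
  have hftrip : f = (X - C x0)^3 := by
    apply Polynomial.map_injective ι ι.injective
    rw [Polynomial.map_pow, Polynomial.map_sub, map_X, map_C, hx0, hprod]; ring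
  have hroot : f.IsRoot x0 := by rw [hftrip]; simp [IsRoot]
  have hirr : ¬ Irreducible f := not_irreducible_of_root f h3 hroot
  unfold CL
  rw [if_neg hirr, if_pos ⟨x0, hftrip⟩, quadset ι f r r r hprod, rootset ι f r r r hprod,
    ncard_preimage, ncard_preimage]
  have hα : (r^2*r + r^2*r + r^2*r : K) = r*r^2 + r*r^2 + r*r^2 := by ring
  rw [hα, Set.pair_eq_singleton]
  have hmem1 : (r*r^2 + r*r^2 + r*r^2 : K) ∈ Set.range ι := by
    have hφ1 : φ (r*r^2 + r*r^2 + r*r^2) = r*r^2 + r*r^2 + r*r^2 := by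
      simp only [map_add, map_mul, map_pow, hr]
    rcases (hfix _).mpr hφ1 with ⟨x, hx⟩
    exact ⟨x, hx⟩
  have hmem2 : r ∈ Set.range ι := ⟨x0, hx0⟩
  rw [show ({r, r, r} : Set K) = {r} by ext y; simp]
  rw [Set.inter_eq_self_of_subset_left (Set.singleton_subset_iff.mpr hmem1),
    Set.inter_eq_self_of_subset_left (Set.singleton_subset_iff.mpr hmem2)]
  simp

lemma caseDouble (f : E[X]) (h3 : f.natDegree = 3) (u v : K) (huv : u ≠ v)
    (hprod : f.map ι = (X - C u) * (X - C u) * (X - C v)) (hu : φ u = u) (hv : φ v = v) :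
    CL f := by
  obtain ⟨xu, hxu⟩ := (hfix u).mpr hu
  have hroot : f.IsRoot xu := by
    have : xu ∈ {x : E | f.eval x = 0} := by
      rw [rootset ι f u u v hprod]
      simp [hxu]
    exact this
  have hirr : ¬ Irreducible f := not_irreducible_of_root f h3 hroot
  have htrip : ¬ ∃ x : E, f = (X - C x)^3 := by
    rintro ⟨x, hfx⟩
    obtain ⟨h1, -, h3'⟩ := eq_of_trip ι f hfx u u v hprod
    exact huv (h1.trans h3'.symm)
  unfold CL
  rw [if_neg hirr, if_neg htrip, quadset ι f u u v hprod, rootset ι f u u v hprod,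
    ncard_preimage, ncard_preimage]
  have hα : (u^2*u + u^2*v + v^2*u : K) = u*u^2 + u*v^2 + v*u^2 := by ring
  rw [hα, Set.pair_eq_singleton]
  have hmem1 : (u*u^2 + u*v^2 + v*u^2 : K) ∈ Set.range ι := by
    have hφ1 : φ (u*u^2 + u*v^2 + v*u^2) = u*u^2 + u*v^2 + v*u^2 := by
      simp only [map_add, map_mul, map_pow, hu, hv]
    rcases (hfix _).mpr hφ1 with ⟨x, hx⟩
    exact ⟨x, hx⟩
  have hmemu : u ∈ Set.range ι := ⟨xu, hxu⟩
  have hmemv : v ∈ Set.range ι := by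
    rcases (hfix v).mpr hv with ⟨x, hx⟩; exact ⟨x, hx⟩
  rw [show ({u, u, v} : Set K) = {u, v} by ext y; simp]
  rw [Set.inter_eq_self_of_subset_left (Set.singleton_subset_iff.mpr hmem1),
    Set.inter_eq_self_of_subset_left (by rintro y (rfl | rfl) <;> assumption)]
  rw [Set.ncard_singleton, Set.ncard_pair huv]

lemma caseSplit (f : E[X]) (h3 : f.natDegree = 3) (r1 r2 r3 : K)
    (h12 : r1 ≠ r2) (h13 : r1 ≠ r3) (h23 : r2 ≠ r3)
    (hprod : f.map ι = (X - C r1) * (X - C r2) * (X - C r3))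
    (h1 : φ r1 = r1) (h2 : φ r2 = r2) (h3' : φ r3 = r3) : CL f := by
  obtain ⟨x1, hx1⟩ := (hfix r1).mpr h1
  have hroot : f.IsRoot x1 := by
    have : x1 ∈ {x : E | f.eval x = 0} := by rw [rootset ι f r1 r2 r3 hprod]; simp [hx1]
    exact this
  have hirr : ¬ Irreducible f := not_irreducible_of_root f h3 hroot
  have htrip : ¬ ∃ x : E, f = (X - C x)^3 := by
    rintro ⟨x, hfx⟩
    obtain ⟨ha, hb, -⟩ := eq_of_trip ι f hfx r1 r2 r3 hprod
    exact h12 (ha.trans hb.symm)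
  unfold CL
  rw [if_neg hirr, if_neg htrip, quadset ι f r1 r2 r3 hprod, rootset ι f r1 r2 r3 hprod,
    ncard_preimage, ncard_preimage]
  have hαne : (r1^2*r2 + r2^2*r3 + r3^2*r1 : K) ≠ r1*r2^2 + r2*r3^2 + r3*r1^2 := by
    intro h
    have : ((r1 - r2) * (r2 - r3) * (r3 - r1) : K) ≠ 0 :=
      mul_ne_zero (mul_ne_zero (sub_ne_zero.mpr h12) (sub_ne_zero.mpr h23))
        (sub_ne_zero.mpr h13.symm)
    apply this
    linear_combination -h
  have hφ1' : φ (r1^2*r2 + r2^2*r3 + r3^2*r1) = r1^2*r2 + r2^2*r3 + r3^2*r1 := by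
    simp only [map_add, map_mul, map_pow, h1, h2, h3']
  have hφ2' : φ (r1*r2^2 + r2*r3^2 + r3*r1^2) = r1*r2^2 + r2*r3^2 + r3*r1^2 := by
    simp only [map_add, map_mul, map_pow, h1, h2, h3']
  have hm1 : (r1^2*r2 + r2^2*r3 + r3^2*r1 : K) ∈ Set.range ι := by
    rcases (hfix _).mpr hφ1' with ⟨x, hx⟩
    exact ⟨x, hx⟩
  have hm2 : (r1*r2^2 + r2*r3^2 + r3*r1^2 : K) ∈ Set.range ι := by
    rcases (hfix _).mpr hφ2' with ⟨x, hx⟩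
    exact ⟨x, hx⟩
  have hmr : ∀ r ∈ ({r1, r2, r3} : Set K), r ∈ Set.range ι := by
    rintro r (rfl | rfl | rfl)
    · exact ⟨x1, hx1⟩
    · rcases (hfix _).mpr h2 with ⟨x, hx⟩; exact ⟨x, hx⟩
    · rcases (hfix _).mpr h3' with ⟨x, hx⟩; exact ⟨x, hx⟩
  rw [Set.inter_eq_self_of_subset_left (by rintro y (rfl | rfl) <;> assumption),
    Set.inter_eq_self_of_subset_left hmr]
  rw [Set.ncard_pair hαne, Set.ncard_eq_three.mpr ⟨r1, r2, r3, h12, h13, h23, rfl⟩]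

lemma caseOneFixed (f : E[X]) (h3 : f.natDegree = 3) (r1 r2 r3 : K)
    (h12 : r1 ≠ r2) (h13 : r1 ≠ r3) (h23 : r2 ≠ r3)
    (hprod : f.map ι = (X - C r1) * (X - C r2) * (X - C r3))
    (h1 : φ r1 = r1) (h2 : φ r2 = r3) (h3' : φ r3 = r2) : CL f := by
  obtain ⟨x1, hx1⟩ := (hfix r1).mpr h1
  have hnr2 : r2 ∉ Set.range ι := by
    rintro ⟨x, hx⟩
    exact h23 ((((hfix r2).mp ⟨x, hx⟩).symm.trans h2).symm).symm
  have hnr3 : r3 ∉ Set.range ι := by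
    rintro ⟨x, hx⟩
    exact h23 ((((hfix r3).mp ⟨x, hx⟩).symm.trans h3')).symm
  have hroot : f.IsRoot x1 := by
    have : x1 ∈ {x : E | f.eval x = 0} := by rw [rootset ι f r1 r2 r3 hprod]; simp [hx1]
    exact this
  have hirr : ¬ Irreducible f := not_irreducible_of_root f h3 hroot
  have htrip : ¬ ∃ x : E, f = (X - C x)^3 := by
    rintro ⟨x, hfx⟩
    obtain ⟨ha, hb, -⟩ := eq_of_trip ι f hfx r1 r2 r3 hprod
    exact h12 (ha.trans hb.symm)
  unfold CL
  rw [if_neg hirr, if_neg htrip, quadset ι f r1 r2 r3 hprod, rootset ι f r1 r2 r3 hprod,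
    ncard_preimage, ncard_preimage]
  have hαne : (r1^2*r2 + r2^2*r3 + r3^2*r1 : K) ≠ r1*r2^2 + r2*r3^2 + r3*r1^2 := by
    intro h
    have : ((r1 - r2) * (r2 - r3) * (r3 - r1) : K) ≠ 0 :=
      mul_ne_zero (mul_ne_zero (sub_ne_zero.mpr h12) (sub_ne_zero.mpr h23))
        (sub_ne_zero.mpr h13.symm)
    apply this
    linear_combination -h
  have hφα1 : φ (r1^2*r2 + r2^2*r3 + r3^2*r1) = r1*r2^2 + r2*r3^2 + r3*r1^2 := by
    simp only [map_add, map_mul, map_pow, h1, h2, h3']; ring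
  have hφα2 : φ (r1*r2^2 + r2*r3^2 + r3*r1^2) = r1^2*r2 + r2^2*r3 + r3^2*r1 := by
    simp only [map_add, map_mul, map_pow, h1, h2, h3']; ring
  have hnα1 : (r1^2*r2 + r2^2*r3 + r3^2*r1 : K) ∉ Set.range ι := by
    rintro ⟨x, hx⟩
    exact hαne (((hfix _).mp ⟨x, hx⟩).symm.trans hφα1)
  have hnα2 : (r1*r2^2 + r2*r3^2 + r3*r1^2 : K) ∉ Set.range ι := by
    rintro ⟨x, hx⟩
    exact hαne (((hfix _).mp ⟨x, hx⟩).symm.trans hφα2).symm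
  have hq : ({r1^2*r2 + r2^2*r3 + r3^2*r1, r1*r2^2 + r2*r3^2 + r3*r1^2} : Set K) ∩ Set.range ι
      = ∅ := by
    ext y
    simp only [Set.mem_inter_iff, Set.mem_insert_iff, Set.mem_singleton_iff, Set.mem_empty_iff_false,
      iff_false, not_and]
    rintro (rfl | rfl) <;> assumption
  have hr : ({r1, r2, r3} : Set K) ∩ Set.range ι = {r1} := by
    ext y
    simp only [Set.mem_inter_iff, Set.mem_insert_iff, Set.mem_singleton_iff]
    constructor
    · rintro ⟨rfl | rfl | rfl, hy⟩
      · rfl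
      · exact absurd hy hnr2
      · exact absurd hy hnr3
    · rintro rfl
      exact ⟨Or.inl rfl, ⟨x1, hx1⟩⟩
  rw [hq, hr]
  simp

lemma caseCycle (f : E[X]) (h3 : f.natDegree = 3) (r1 r2 r3 : K)
    (h12 : r1 ≠ r2) (h13 : r1 ≠ r3) (h23 : r2 ≠ r3)
    (hprod : f.map ι = (X - C r1) * (X - C r2) * (X - C r3))
    (h1 : φ r1 = r2) (h2 : φ r2 = r3) (h3' : φ r3 = r1) : CL f := by
  have hnr1 : r1 ∉ Set.range ι := by
    rintro ⟨x, hx⟩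
    exact h12 (((hfix r1).mp ⟨x, hx⟩).symm.trans h1)
  have hnr2 : r2 ∉ Set.range ι := by
    rintro ⟨x, hx⟩
    exact h23 (((hfix r2).mp ⟨x, hx⟩).symm.trans h2)
  have hnr3 : r3 ∉ Set.range ι := by
    rintro ⟨x, hx⟩
    exact h13 ((((hfix r3).mp ⟨x, hx⟩).symm.trans h3').symm)
  have hirr : Irreducible f := by
    rw [irred_iff_no_root f h3]
    intro x hx
    have : x ∈ {x : E | f.eval x = 0} := hx
    rw [rootset ι f r1 r2 r3 hprod] at this
    rcases this with h | h | h
    · exact hnr1 ⟨x, h⟩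
    · exact hnr2 ⟨x, h⟩
    · exact hnr3 ⟨x, h⟩
  have htrip : ¬ ∃ x : E, f = (X - C x)^3 := by
    rintro ⟨x, hfx⟩
    obtain ⟨ha, hb, -⟩ := eq_of_trip ι f hfx r1 r2 r3 hprod
    exact h12 (ha.trans hb.symm)
  unfold CL
  rw [if_pos hirr, if_neg htrip, quadset ι f r1 r2 r3 hprod, rootset ι f r1 r2 r3 hprod,
    ncard_preimage, ncard_preimage]
  have hαne : (r1^2*r2 + r2^2*r3 + r3^2*r1 : K) ≠ r1*r2^2 + r2*r3^2 + r3*r1^2 := by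
    intro h
    have : ((r1 - r2) * (r2 - r3) * (r3 - r1) : K) ≠ 0 :=
      mul_ne_zero (mul_ne_zero (sub_ne_zero.mpr h12) (sub_ne_zero.mpr h23))
        (sub_ne_zero.mpr h13.symm)
    apply this
    linear_combination -h
  have hφ1 : φ (r1^2*r2 + r2^2*r3 + r3^2*r1) = r1^2*r2 + r2^2*r3 + r3^2*r1 := by
    simp only [map_add, map_mul, map_pow, h1, h2, h3']; ring
  have hφ2 : φ (r1*r2^2 + r2*r3^2 + r3*r1^2) = r1*r2^2 + r2*r3^2 + r3*r1^2 := by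
    simp only [map_add, map_mul, map_pow, h1, h2, h3']; ring
  have hm1 : (r1^2*r2 + r2^2*r3 + r3^2*r1 : K) ∈ Set.range ι := by
    rcases (hfix _).mpr hφ1 with ⟨x, hx⟩
    exact ⟨x, hx⟩
  have hm2 : (r1*r2^2 + r2*r3^2 + r3*r1^2 : K) ∈ Set.range ι := by
    rcases (hfix _).mpr hφ2 with ⟨x, hx⟩
    exact ⟨x, hx⟩
  have hr : ({r1, r2, r3} : Set K) ∩ Set.range ι = ∅ := by
    ext y
    simp only [Set.mem_inter_iff, Set.mem_insert_iff, Set.mem_singleton_iff,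
      Set.mem_empty_iff_false, iff_false, not_and]
    rintro (rfl | rfl | rfl) <;> assumption
  rw [hr, Set.inter_eq_self_of_subset_left (by rintro y (rfl | rfl) <;> assumption),
    Set.ncard_pair hαne]
  simp


end TwoFields

section CoreSec
variable {K : Type*} [Field K]

lemma double_fix {φ : K →+* K} {u v : K} (huv : u ≠ v)
    (h : ({φ u, φ u, φ v} : Multiset K) = {u, u, v}) : φ u = u ∧ φ v = v := by
  rcases multiset_triple_eq h with ⟨a1, a2, a3⟩ | ⟨a1, a2, a3⟩ | ⟨a1, a2, a3⟩ |
    ⟨a1, a2, a3⟩ | ⟨a1, a2, a3⟩ | ⟨a1, a2, a3⟩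
  · exact ⟨a1, a3⟩
  · exact absurd (a1.symm.trans a2) huv
  · exact ⟨a1, a3⟩
  · exact absurd (a1.symm.trans a2) huv
  · exact absurd (a2.symm.trans a1) huv
  · exact absurd (a2.symm.trans a1) huv

lemma core {E : Type*} [Field E] [Fintype E] (f : E[X]) (hm : f.Monic) (h3 : f.natDegree = 3) : CL f := by
  classical
  set K' := AlgebraicClosure E with hK'
  let ι : E →+* K' := algebraMap E K'
  -- char p setup
  have hchar : CharP E (ringChar E) := ringChar.charP E
  have hprime : (ringChar E).Prime := CharP.char_is_prime E (ringChar E)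
  haveI : Fact (ringChar E).Prime := ⟨hprime⟩
  obtain ⟨k, -, hcard⟩ := FiniteField.card E (ringChar E)
  haveI : CharP K' (ringChar E) := charP_of_injective_algebraMap (algebraMap E K').injective _
  haveI : ExpChar K' (ringChar E) := ExpChar.prime hprime
  let φ : K' →+* K' := iterateFrobenius K' (ringChar E) k
  have hφ : ∀ y : K', φ y = y ^ (Fintype.card E) := by
    intro y
    rw [hcard]
    exact iterateFrobenius_def (R := K') (p := ringChar E) (n := (k : ℕ)) y
  have hfix : ∀ y : K', (∃ x : E, ι x = y) ↔ φ y = y := by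
    intro y
    rw [hφ]
    exact mem_range_iff_pow_card ι y
  -- roots
  have hsp : (f.map ι).Splits := IsAlgClosed.splits (f.map ι)
  have hdeg : (f.map ι).natDegree = 3 := by rw [hm.natDegree_map]; exact h3
  have hroots_card : (f.map ι).roots.card = 3 := by
    rw [splits_iff_card_roots.mp hsp, hdeg]
  obtain ⟨r1, r2, r3, hm3⟩ := Multiset.card_eq_three.mp hroots_card
  have hprod : f.map ι = (X - C r1) * (X - C r2) * (X - C r3) := by
    have h := hsp.eq_prod_roots_of_monic (hm.map ι)
    rw [hm3] at h
    rw [h]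
    simp only [Multiset.insert_eq_cons, Multiset.map_cons, Multiset.map_singleton,
      Multiset.prod_cons, Multiset.prod_singleton]
    ring
  -- Frobenius permutes the roots
  have hcomp : (f.map ι).map φ = f.map ι := by
    rw [Polynomial.map_map]
    congr 1
    ext x
    simp only [RingHom.comp_apply]
    rw [hφ, ← map_pow, FiniteField.pow_card]
  have hperm : ({φ r1, φ r2, φ r3} : Multiset K') = {r1, r2, r3} := by
    have h := hsp.roots_map φ
    rw [hcomp, hm3] at h
    simpa only [Multiset.insert_eq_cons, Multiset.map_cons, Multiset.map_singleton] using h.symm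
  -- case analysis
  by_cases h12 : r1 = r2
  · by_cases h13 : r1 = r3
    · -- triple root
      subst h12 h13
      have hr : φ r1 = r1 := by
        have : φ r1 ∈ ({r1, r1, r1} : Multiset K') := by rw [← hperm]; simp
        simpa using this
      exact caseTriple ι φ hfix f h3 r1 hprod hr
    · -- r1 = r2 ≠ r3
      subst h12
      obtain ⟨hu, hv⟩ := double_fix h13 hperm
      exact caseDouble ι φ hfix f h3 r1 r3 h13 hprod hu hv
  · by_cases h13 : r1 = r3
    · -- r1 = r3 ≠ r2 : double root r1, simple root r2
      subst h13
      have hperm' : ({φ r1, φ r1, φ r2} : Multiset K') = {r1, r1, r2} := by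
        rw [tswap23 (φ r1) (φ r1) (φ r2), tswap23 r1 r1 r2]
        exact hperm
      obtain ⟨hu, hv⟩ := double_fix h12 hperm'
      have hprod' : f.map ι = (X - C r1) * (X - C r1) * (X - C r2) := by rw [hprod]; ring
      exact caseDouble ι φ hfix f h3 r1 r2 h12 hprod' hu hv
    · by_cases h23 : r2 = r3
      · -- r2 = r3 ≠ r1
        subst h23
        have hperm' : ({φ r2, φ r2, φ r1} : Multiset K') = {r2, r2, r1} := by
          rw [tswap23 (φ r2) (φ r2) (φ r1), tswap12 (φ r2) (φ r1) (φ r2),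
            tswap23 r2 r2 r1, tswap12 r2 r1 r2]
          exact hperm
        obtain ⟨hu, hv⟩ := double_fix (Ne.symm h12) hperm'
        have hprod' : f.map ι = (X - C r2) * (X - C r2) * (X - C r1) := by rw [hprod]; ring
        exact caseDouble ι φ hfix f h3 r2 r1 (Ne.symm h12) hprod' hu hv
      · -- all distinct
        rcases multiset_triple_eq hperm with ⟨a1, a2, a3⟩ | ⟨a1, a2, a3⟩ | ⟨a1, a2, a3⟩ |
          ⟨a1, a2, a3⟩ | ⟨a1, a2, a3⟩ | ⟨a1, a2, a3⟩
        · exact caseSplit ι φ hfix f h3 r1 r2 r3 h12 h13 h23 hprod a1 a2 a3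
        · exact caseOneFixed ι φ hfix f h3 r1 r2 r3 h12 h13 h23 hprod a1 a2 a3
        · -- φ r1 = r2, φ r2 = r1, φ r3 = r3 : fixed r3, swap r1 r2
          have hprod' : f.map ι = (X - C r3) * (X - C r1) * (X - C r2) := by rw [hprod]; ring
          exact caseOneFixed ι φ hfix f h3 r3 r1 r2 (Ne.symm h13) (Ne.symm h23) h12 hprod' a3 a1 a2
        · -- cycle r1 → r2 → r3 → r1
          exact caseCycle ι φ hfix f h3 r1 r2 r3 h12 h13 h23 hprod a1 a2 a3
        · -- φ r1 = r3, φ r2 = r1, φ r3 = r2 : cycle r1 → r3 → r2 → r1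
          have hprod' : f.map ι = (X - C r1) * (X - C r3) * (X - C r2) := by rw [hprod]; ring
          exact caseCycle ι φ hfix f h3 r1 r3 r2 h13 h12 (Ne.symm h23) hprod' a1 a3 a2
        · -- φ r1 = r3, φ r2 = r2, φ r3 = r1 : fixed r2, swap r1 r3
          have hprod' : f.map ι = (X - C r2) * (X - C r1) * (X - C r3) := by rw [hprod]; ring
          exact caseOneFixed ι φ hfix f h3 r2 r1 r3 (Ne.symm h12) h23 h13 hprod' a2 a1 a3

end CoreSec

end CubicAux

open CubicAux in
lemma ncard_setOf_eq_sum {α : Type*} [Fintype α] (p : α → Prop) [DecidablePred p] :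
    {a : α | p a}.ncard = ∑ a : α, if p a then 1 else 0 := by
  classical
  rw [Set.ncard_eq_toFinset_card', Set.toFinset_setOf, Finset.card_filter]

lemma ncard_prod_eq_sum_snd {α β : Type*} [Fintype α] [Fintype β] (p : α × β → Prop) :
    {z : α × β | p z}.ncard = ∑ b : β, {a : α | p (a, b)}.ncard := by
  classical
  rw [ncard_setOf_eq_sum, Fintype.sum_prod_type_right]
  exact Finset.sum_congr rfl fun b _ => (ncard_setOf_eq_sum fun a => p (a, b)).symm

lemma ncard_prod_eq_sum_fst {α β : Type*} [Fintype α] [Fintype β] (p : α × β → Prop) :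
    {z : α × β | p z}.ncard = ∑ a : α, {b : β | p (a, b)}.ncard := by
  classical
  rw [ncard_setOf_eq_sum, Fintype.sum_prod_type]
  exact Finset.sum_congr rfl fun a _ => (ncard_setOf_eq_sum fun b => p (a, b)).symm

/-- The quadratic resolvent `x² + (ab − 3c)x + (a³c + b³ + 9c² − 6abc)` of a monic cubic
`x³ + ax² + bx + c`; here applied with `a, b, c` the coefficients of the monic cubic
`g(x) − β h(x)`. Lemma 6 (first form): `|Ū(n,q)| = (N + A − C)/3` where `N` is the number
of points `(x, β) ∈ F_{q^n} × F_{q^n}` on the curve given by the quadratic resolvent. -/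
theorem stmt6 {F : Type*} [Field F] [Fintype F] (q : ℕ) (hq : Fintype.card F = q)
    (g h : F[X]) (hg : g.Monic) (hgdeg : g.natDegree = 3) (hhdeg : h.natDegree ≤ 2)
    (hcop : IsCoprime g h)
    (n : ℕ) (hn : 1 ≤ n)
    (E : Type*) [Field E] [Algebra F E] [Fintype E] (hE : Fintype.card E = q ^ n)
    (P : E → E[X])
    (hP : P = fun β => g.map (algebraMap F E) - C β * h.map (algebraMap F E))
    (nA nC nN : ℕ)
    (hA : nA = {x : E | (Polynomial.aeval x) h = 0}.ncard)
    (hC : nC = {β : E | ∃ x : E, P β = (X - C x) ^ 3}.ncard)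
    (hN : nN = {z : E × E |
        z.1 ^ 2 + ((P z.2).coeff 2 * (P z.2).coeff 1 - 3 * (P z.2).coeff 0) * z.1
          + ((P z.2).coeff 2 ^ 3 * (P z.2).coeff 0 + (P z.2).coeff 1 ^ 3
            + 9 * (P z.2).coeff 0 ^ 2
            - 6 * (P z.2).coeff 2 * (P z.2).coeff 1 * (P z.2).coeff 0) = 0}.ncard) :
    ((Ubar g h E).ncard : ℚ) = (nN + nA - nC) / 3 := by
  classical
  set ι' := algebraMap F E with hι'
  -- P β is monic of degree 3
  have hPm : ∀ β : E, (P β).Monic ∧ (P β).natDegree = 3 := by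
    intro β
    have hgm : (g.map ι').Monic := hg.map ι'
    have hgd : (g.map ι').natDegree = 3 := by rw [hg.natDegree_map]; exact hgdeg
    have hqd : (C β * h.map ι').natDegree ≤ 2 :=
      le_trans (natDegree_C_mul_le β _) (le_trans natDegree_map_le hhdeg)
    have hlt : (C β * h.map ι').degree < (g.map ι').degree := by
      calc (C β * h.map ι').degree ≤ ((2 : ℕ) : WithBot ℕ) :=
            degree_le_of_natDegree_le hqd
        _ < ((3 : ℕ) : WithBot ℕ) := by exact_mod_cast (by norm_num : (2:ℕ) < 3)
        _ = (g.map ι').degree := by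
            rw [degree_eq_natDegree hgm.ne_zero, hgd]
    constructor
    · rw [hP]; exact hgm.sub_of_left hlt
    · rw [hP]
      simp only
      rw [natDegree_sub_eq_left_of_natDegree_lt (by rw [hgd]; omega), hgd]
  -- pointwise identity from the core lemma
  have hcore : ∀ β : E, {x : E | x^2 + ((P β).coeff 2 * (P β).coeff 1 - 3 * (P β).coeff 0) * x
      + ((P β).coeff 2 ^ 3 * (P β).coeff 0 + (P β).coeff 1 ^ 3 + 9 * (P β).coeff 0 ^ 2
        - 6 * (P β).coeff 2 * (P β).coeff 1 * (P β).coeff 0) = 0}.ncard + 1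
      = 3 * (if Irreducible (P β) then 1 else 0) + (if ∃ x : E, P β = (X - C x)^3 then 1 else 0)
        + {x : E | (P β).eval x = 0}.ncard :=
    fun β => by
      have H := CubicAux.core (P β) (hPm β).1 (hPm β).2
      unfold CubicAux.CL at H
      convert H using 4

  -- N as a sum
  have hNsum : nN = ∑ β : E, {x : E | x^2 + ((P β).coeff 2 * (P β).coeff 1 - 3 * (P β).coeff 0) * x
      + ((P β).coeff 2 ^ 3 * (P β).coeff 0 + (P β).coeff 1 ^ 3 + 9 * (P β).coeff 0 ^ 2
        - 6 * (P β).coeff 2 * (P β).coeff 1 * (P β).coeff 0) = 0}.ncard := by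
    rw [hN, ncard_prod_eq_sum_snd]
  -- root-pair count
  have hrootpair : ∑ β : E, {x : E | (P β).eval x = 0}.ncard
      = ∑ x : E, {β : E | (P β).eval x = 0}.ncard := by
    rw [← ncard_prod_eq_sum_snd (fun z : E × E => (P z.2).eval z.1 = 0),
      ncard_prod_eq_sum_fst (fun z : E × E => (P z.2).eval z.1 = 0)]
  have heval : ∀ (β x : E), (P β).eval x = aeval x g - β * aeval x h := by
    intro β x
    rw [hP]
    simp only [eval_sub, eval_mul, eval_C, aeval_def, eval_map]
    rw [hι']
  have hnz : ∀ x : E, aeval x h = 0 → aeval x g ≠ 0 := by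
    intro x h0 g0
    obtain ⟨a, b, hab⟩ := hcop
    have := congrArg (aeval x) hab
    simp only [map_add, map_mul, map_one, h0, g0, mul_zero, add_zero, zero_add] at this
    exact zero_ne_one this
  have hfiber : ∀ x : E, {β : E | (P β).eval x = 0}.ncard
      = if aeval x h = 0 then 0 else 1 := by
    intro x
    by_cases h0 : aeval x h = 0
    · rw [if_pos h0]
      have : {β : E | (P β).eval x = 0} = ∅ := by
        ext β
        simp only [Set.mem_setOf_eq, Set.mem_empty_iff_false, iff_false]
        rw [heval, h0, mul_zero, sub_zero]
        exact hnz x h0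
      rw [this, Set.ncard_empty]
    · rw [if_neg h0]
      have : {β : E | (P β).eval x = 0} = {aeval x g / aeval x h} := by
        ext β
        simp only [Set.mem_setOf_eq, Set.mem_singleton_iff]
        rw [heval, sub_eq_zero]
        rw [eq_div_iff h0, eq_comm, mul_comm]
      rw [this, Set.ncard_singleton]
  -- counts as sums
  have hIsum : (Ubar g h E).ncard = ∑ β : E, if Irreducible (P β) then 1 else 0 := by
    have : Ubar g h E = {β : E | Irreducible (P β)} := by
      rw [hP]; rfl
    rw [this]; exact ncard_setOf_eq_sum _
  have hCsum : nC = ∑ β : E, if ∃ x : E, P β = (X - C x)^3 then 1 else 0 := by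
    rw [hC]; exact ncard_setOf_eq_sum _
  have hAsum : nA = ∑ x : E, if aeval x h = 0 then 1 else 0 := by
    rw [hA]; exact ncard_setOf_eq_sum _
  -- combine
  have hmain : nN + Fintype.card E
      = 3 * (Ubar g h E).ncard + nC + ∑ β : E, {x : E | (P β).eval x = 0}.ncard := by
    rw [hNsum, hIsum, hCsum, Finset.mul_sum, ← Finset.sum_add_distrib, ← Finset.sum_add_distrib]
    rw [show (Fintype.card E : ℕ) = ∑ _β : E, 1 by simp]
    rw [← Finset.sum_add_distrib]
    exact Finset.sum_congr rfl fun β _ => hcore β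
  have hroots_tot : (∑ β : E, {x : E | (P β).eval x = 0}.ncard) + nA = Fintype.card E := by
    rw [hrootpair, hAsum, ← Finset.sum_add_distrib]
    rw [show (Fintype.card E : ℕ) = ∑ _x : E, 1 by simp]
    refine Finset.sum_congr rfl fun x _ => ?_
    rw [hfiber x]
    by_cases h0 : aeval x h = 0 <;> simp [h0]
  have hkey : nN + nA = 3 * (Ubar g h E).ncard + nC := by omega
  have hkeyQ : (nN : ℚ) + nA = 3 * ((Ubar g h E).ncard : ℚ) + nC := by exact_mod_cast hkey
  field_simp
  linarith
end
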